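/- arXiv:2402.17255 — 5 statements merged into one kernel-verified Lean document; each statement's English description precedes it below -/
import Mathlib

section
/- Let c₁, c₂ be positive integers, G a graph, P a path in G from x to y, and 𝓑 a bramble in G of order at least c₁ + c₂ such that V(P) intersects every element of 𝓑. Then P can be partitioned into two edge-disjoint subpaths P₁ (containing x) and P₂ (containing y), sharing exactly one endpoint, such that the subbramble 𝓑₁ of elements of 𝓑 intersecting V(P₁) has order exactly c₁, and the subbramble of 𝓑 consisting of elements not intersecting V(P₁) \ V(P₂) has order at least c₂ + 1 and every such element intersects V(P₂). -/
open SimpleGraph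

def IsBramble {V : Type*} (G : SimpleGraph V) (B : Set (Set V)) : Prop :=
  (∀ b ∈ B, (G.induce b).Connected) ∧
    ∀ b ∈ B, ∀ b' ∈ B, (G.induce (b ∪ b')).Connected

def HitsAll {V : Type*} (B : Set (Set V)) (X : Set V) : Prop :=
  ∀ b ∈ B, (b ∩ X).Nonempty

noncomputable def brambleOrder {V : Type*} (B : Set (Set V)) : ℕ :=
  sInf {n | ∃ X : Set V, X.Finite ∧ HitsAll B X ∧ X.ncard = n}

lemma brambleOrder_le {V : Type*} (B : Set (Set V)) (X : Set V)
    (hX : X.Finite) (h : HitsAll B X) : brambleOrder B ≤ X.ncard :=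
  Nat.sInf_le ⟨X, hX, h, rfl⟩

lemma exists_min_hitting {V : Type*} [Finite V] (B : Set (Set V))
    (hne : ∀ b ∈ B, b.Nonempty) :
    ∃ X : Set V, X.Finite ∧ HitsAll B X ∧ X.ncard = brambleOrder B := by
  have hne' : {n | ∃ X : Set V, X.Finite ∧ HitsAll B X ∧ X.ncard = n}.Nonempty :=
    ⟨(Set.univ : Set V).ncard, Set.univ, Set.toFinite _,
      fun b hb => by simpa using hne b hb, rfl⟩
  exact Nat.sInf_mem hne'

lemma le_brambleOrder {V : Type*} [Finite V] (B : Set (Set V)) (m : ℕ)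
    (hne : ∀ b ∈ B, b.Nonempty)
    (h : ∀ X : Set V, X.Finite → HitsAll B X → m ≤ X.ncard) :
    m ≤ brambleOrder B := by
  obtain ⟨X, hXf, hXh, hXc⟩ := exists_min_hitting B hne
  exact hXc ▸ h X hXf hXh

lemma stop_case {V : Type*} [Finite V] {G : SimpleGraph V}
    (c₁ c₂ : ℕ) (hc₁ : 0 < c₁) (hc₂ : 0 < c₂)
    (B : Set (Set V)) (hord : c₁ + c₂ ≤ brambleOrder B)
    {x w y : V} (q : G.Walk x w) (r : G.Walk w y)
    (Hb : ∀ b ∈ B, ∃ v ∈ b, v ∈ q.support ∨ v ∈ r.support)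
    (Y : Set V) (hYc : Y.ncard ≤ c₁ - 1)
    (hYh : HitsAll {b ∈ B | ∃ v ∈ b, v ∈ q.support ∧ v ≠ w} Y)
    (h3 : brambleOrder {b ∈ B | ∃ v ∈ b, v ∈ q.support} ≤ c₁)
    (hstop : c₁ ≤ brambleOrder {b ∈ B | ∃ v ∈ b, v ∈ q.support}) :
    brambleOrder {b ∈ B | ∃ v ∈ b, v ∈ q.support} = c₁ ∧
    c₂ + 1 ≤ brambleOrder {b ∈ B | ¬ ∃ v ∈ b, v ∈ q.support ∧ v ∉ r.support} ∧
    ∀ b ∈ B, (¬ ∃ v ∈ b, v ∈ q.support ∧ v ∉ r.support) →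
      ∃ v ∈ b, v ∈ r.support := by
  have hlast : ∀ b ∈ B, (¬ ∃ v ∈ b, v ∈ q.support ∧ v ∉ r.support) →
      ∃ v ∈ b, v ∈ r.support := by
    intro b hb hno
    push_neg at hno
    obtain ⟨v, hvb, hvq⟩ := Hb b hb
    rcases hvq with hvq | hvr
    · exact ⟨v, hvb, hno v hvb hvq⟩
    · exact ⟨v, hvb, hvr⟩
  refine ⟨le_antisymm h3 hstop, ?_, hlast⟩
  apply le_brambleOrder
  · rintro b ⟨hb, hno⟩
    obtain ⟨v, hvb, -⟩ := hlast b hb hno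
    exact ⟨v, hvb⟩
  · intro X hXf hXh
    by_contra hX
    push_neg at hX
    have hunion : HitsAll B (X ∪ Y) := by
      intro b hb
      by_cases hb2 : ∃ v ∈ b, v ∈ q.support ∧ v ∉ r.support
      · obtain ⟨v, hvb, hvq, hvr⟩ := hb2
        have hvw : v ≠ w := fun h => hvr (h ▸ r.start_mem_support)
        obtain ⟨u, hu1, hu2⟩ := hYh b ⟨hb, v, hvb, hvq, hvw⟩
        exact ⟨u, hu1, Or.inr hu2⟩
      · obtain ⟨u, hu1, hu2⟩ := hXh b ⟨hb, hb2⟩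
        exact ⟨u, hu1, Or.inl hu2⟩
    have h1 : brambleOrder B ≤ (X ∪ Y).ncard :=
      brambleOrder_le B _ (Set.toFinite _) hunion
    have h2 : (X ∪ Y).ncard ≤ X.ncard + Y.ncard := Set.ncard_union_le X Y
    omega

lemma aux_partition {V : Type*} [Finite V] {G : SimpleGraph V}
    (c₁ c₂ : ℕ) (hc₁ : 0 < c₁) (hc₂ : 0 < c₂)
    (B : Set (Set V)) (hord : c₁ + c₂ ≤ brambleOrder B) :
    ∀ {w y : V} (r : G.Walk w y), ∀ {x : V} (q : G.Walk x w),
      (∀ b ∈ B, ∃ v ∈ b, v ∈ q.support ∨ v ∈ r.support) →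
      (∃ Y : Set V, Y.ncard ≤ c₁ - 1 ∧
        HitsAll {b ∈ B | ∃ v ∈ b, v ∈ q.support ∧ v ≠ w} Y) →
      brambleOrder {b ∈ B | ∃ v ∈ b, v ∈ q.support} ≤ c₁ →
      ∃ (z : V) (p₁ : G.Walk x z) (p₂ : G.Walk z y),
        q.append r = p₁.append p₂ ∧
        brambleOrder {b ∈ B | ∃ v ∈ b, v ∈ p₁.support} = c₁ ∧
        c₂ + 1 ≤
          brambleOrder {b ∈ B | ¬ ∃ v ∈ b, v ∈ p₁.support ∧ v ∉ p₂.support} ∧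
        ∀ b ∈ B, (¬ ∃ v ∈ b, v ∈ p₁.support ∧ v ∉ p₂.support) →
          ∃ v ∈ b, v ∈ p₂.support := by
  intro w y r
  induction r with
  | @nil w =>
    intro x q Hb HY h3
    obtain ⟨Y, hYc, hYh⟩ := HY
    have hstop : c₁ ≤ brambleOrder {b ∈ B | ∃ v ∈ b, v ∈ q.support} := by
      by_contra hlt
      push_neg at hlt
      obtain ⟨X, hXf, hXh, hXc⟩ :=
        exists_min_hitting {b ∈ B | ∃ v ∈ b, v ∈ q.support}
          (fun b hb => by obtain ⟨v, hv, -⟩ := hb.2; exact ⟨v, hv⟩)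
      have hhits : HitsAll B (insert w X) := by
        intro b hb
        obtain ⟨v, hvb, hvq⟩ := Hb b hb
        rcases hvq with hvq | hvr
        · obtain ⟨u, hu1, hu2⟩ := hXh b ⟨hb, v, hvb, hvq⟩
          exact ⟨u, hu1, Or.inr hu2⟩
        · simp only [Walk.support_nil, List.mem_singleton] at hvr
          exact ⟨v, hvb, Or.inl hvr⟩
      have h1 : brambleOrder B ≤ (insert w X).ncard :=
        brambleOrder_le B _ (Set.toFinite _) hhits
      have h2 : (insert w X).ncard ≤ X.ncard + 1 := Set.ncard_insert_le w X
      omega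
    obtain ⟨h1, h2, h3'⟩ := stop_case c₁ c₂ hc₁ hc₂ B hord q Walk.nil Hb Y hYc hYh h3 hstop
    exact ⟨w, q, Walk.nil, rfl, h1, h2, h3'⟩
  | @cons w u y h r ih =>
    intro x q Hb HY h3
    by_cases hstop : c₁ ≤ brambleOrder {b ∈ B | ∃ v ∈ b, v ∈ q.support}
    · obtain ⟨Y, hYc, hYh⟩ := HY
      obtain ⟨h1, h2, h3'⟩ :=
        stop_case c₁ c₂ hc₁ hc₂ B hord q (Walk.cons h r) Hb Y hYc hYh h3 hstop
      exact ⟨w, q, Walk.cons h r, rfl, h1, h2, h3'⟩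
    · push_neg at hstop
      obtain ⟨Y', hY'f, hY'h, hY'c⟩ :=
        exists_min_hitting {b ∈ B | ∃ v ∈ b, v ∈ q.support}
          (fun b hb => by obtain ⟨v, hv, -⟩ := hb.2; exact ⟨v, hv⟩)
      have hY'le : Y'.ncard ≤ c₁ - 1 := by omega
      set q' : G.Walk x u := q.concat h with hq'
      have hq'sup : ∀ v, v ∈ q'.support ↔ v ∈ q.support ∨ v = u := by
        intro v
        rw [hq', Walk.support_concat]
        simp [List.concat_eq_append]
      have Hb' : ∀ b ∈ B, ∃ v ∈ b, v ∈ q'.support ∨ v ∈ r.support := by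
        intro b hb
        obtain ⟨v, hvb, hvq⟩ := Hb b hb
        rcases hvq with hvq | hvr
        · exact ⟨v, hvb, Or.inl ((hq'sup v).2 (Or.inl hvq))⟩
        · simp only [Walk.support_cons, List.mem_cons] at hvr
          rcases hvr with rfl | hvr
          · exact ⟨v, hvb, Or.inl ((hq'sup v).2 (Or.inl q.end_mem_support))⟩
          · exact ⟨v, hvb, Or.inr hvr⟩
      have HY' : ∃ Y : Set V, Y.ncard ≤ c₁ - 1 ∧
          HitsAll {b ∈ B | ∃ v ∈ b, v ∈ q'.support ∧ v ≠ u} Y := by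
        refine ⟨Y', hY'le, ?_⟩
        rintro b ⟨hb, v, hvb, hvq', hvu⟩
        rcases (hq'sup v).1 hvq' with hvq | rfl
        · exact hY'h b ⟨hb, v, hvb, hvq⟩
        · exact absurd rfl hvu
      have h3' : brambleOrder {b ∈ B | ∃ v ∈ b, v ∈ q'.support} ≤ c₁ := by
        have hhits : HitsAll {b ∈ B | ∃ v ∈ b, v ∈ q'.support} (insert u Y') := by
          rintro b ⟨hb, v, hvb, hvq'⟩
          rcases (hq'sup v).1 hvq' with hvq | rfl
          · obtain ⟨t, ht1, ht2⟩ := hY'h b ⟨hb, v, hvb, hvq⟩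
            exact ⟨t, ht1, Or.inr ht2⟩
          · exact ⟨v, hvb, Or.inl rfl⟩
        have h1 : brambleOrder {b ∈ B | ∃ v ∈ b, v ∈ q'.support} ≤ (insert u Y').ncard :=
          brambleOrder_le _ _ (Set.toFinite _) hhits
        have h2 : (insert u Y').ncard ≤ Y'.ncard + 1 := Set.ncard_insert_le u Y'
        omega
      obtain ⟨z, p₁, p₂, heq, rest⟩ := ih q' Hb' HY' h3'
      refine ⟨z, p₁, p₂, ?_, rest⟩
      rw [← heq, hq', Walk.concat_eq_append, ← Walk.append_assoc]
      simp

/-- Lemma 4.5 (path partition): a path hitting a bramble of order at least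
`c₁ + c₂` splits into two edge-disjoint subpaths with the stated bramble
properties. -/
theorem path_partition {V : Type*} [Finite V] (G : SimpleGraph V)
    (c₁ c₂ : ℕ) (hc₁ : 0 < c₁) (hc₂ : 0 < c₂)
    (x y : V) (p : G.Walk x y) (hp : p.IsPath)
    (B : Set (Set V)) (hB : IsBramble G B) (hord : c₁ + c₂ ≤ brambleOrder B)
    (hhit : HitsAll B {v | v ∈ p.support}) :
    ∃ (z : V) (p₁ : G.Walk x z) (p₂ : G.Walk z y),
      p = p₁.append p₂ ∧
      brambleOrder {b ∈ B | ∃ v ∈ b, v ∈ p₁.support} = c₁ ∧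
      c₂ + 1 ≤
        brambleOrder {b ∈ B | ¬ ∃ v ∈ b, v ∈ p₁.support ∧ v ∉ p₂.support} ∧
      ∀ b ∈ B, (¬ ∃ v ∈ b, v ∈ p₁.support ∧ v ∉ p₂.support) →
        ∃ v ∈ b, v ∈ p₂.support := by
  have Hb : ∀ b ∈ B, ∃ v ∈ b, v ∈ (Walk.nil : G.Walk x x).support ∨ v ∈ p.support := by
    intro b hb
    obtain ⟨v, hv1, hv2⟩ := hhit b hb
    exact ⟨v, hv1, Or.inr hv2⟩
  have HY : ∃ Y : Set V, Y.ncard ≤ c₁ - 1 ∧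
      HitsAll {b ∈ B | ∃ v ∈ b, v ∈ (Walk.nil : G.Walk x x).support ∧ v ≠ x} Y := by
    refine ⟨∅, by simp, ?_⟩
    rintro b ⟨hb, v, hvb, hvs, hvx⟩
    simp only [Walk.support_nil, List.mem_singleton] at hvs
    exact absurd hvs hvx
  have h3 : brambleOrder {b ∈ B | ∃ v ∈ b, v ∈ (Walk.nil : G.Walk x x).support} ≤ c₁ := by
    have hhits : HitsAll {b ∈ B | ∃ v ∈ b, v ∈ (Walk.nil : G.Walk x x).support} {x} := by
      rintro b ⟨hb, v, hvb, hvs⟩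
      simp only [Walk.support_nil, List.mem_singleton] at hvs
      exact ⟨v, hvb, by simp [hvs]⟩
    have h1 := brambleOrder_le _ _ (Set.toFinite {x}) hhits
    simp only [Set.ncard_singleton] at h1
    omega
  obtain ⟨z, p₁, p₂, heq, rest⟩ :=
    aux_partition c₁ c₂ hc₁ hc₂ B hord p (Walk.nil : G.Walk x x) Hb HY h3
  rw [Walk.nil_append] at heq
  exact ⟨z, p₁, p₂, heq, rest⟩
end

section
/- Let G be a graph with a bramble 𝓑 of order at least ℓ, and let S and T be vertex-disjoint subgraphs of G such that for each of V(S) and V(T), there is a subbramble of 𝓑 of order at least ℓ all of whose members intersect V(S), respectively V(T). Then G contains ℓ pairwise vertex-disjoint paths from V(S) to V(T). -/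
set_option linter.unusedSectionVars false
set_option maxHeartbeats 1600000

open SimpleGraph

section MengerDev
variable {V : Type*} [DecidableEq V]


/-- `X` separates `S` from `T` in `G`: every walk from `S` to `T` meets `X`. -/
def Separates (G : SimpleGraph V) (S T X : Set V) : Prop :=
  ∀ ⦃a b : V⦄, a ∈ S → b ∈ T → ∀ p : G.Walk a b, ∃ w ∈ p.support, w ∈ X

/-- `k` pairwise-disjoint `S`–`T` connecting walks. -/
def DisjConn (G : SimpleGraph V) (S T : Set V) (k : ℕ) : Prop :=
  ∃ (u v : Fin k → V) (p : ∀ i, G.Walk (u i) (v i)),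
    (∀ i, u i ∈ S ∧ v i ∈ T) ∧
    ∀ i j, i ≠ j → ∀ w, w ∈ (p i).support → w ∉ (p j).support

lemma exists_firstHit {G : SimpleGraph V} {X : Set V} {a b : V}
    (p : G.Walk a b) (hb : b ∈ X) :
    ∃ c ∈ X, ∃ q : G.Walk a c,
      (∀ v ∈ q.support, v ∈ p.support) ∧ (∀ v ∈ q.support, v ∈ X → v = c) := by
  induction p with
  | nil =>
    exact ⟨_, hb, Walk.nil, by simp, by simp⟩
  | @cons u w b huw p ih =>
    by_cases hu : u ∈ X
    · exact ⟨u, hu, Walk.nil, by simp, by simp⟩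
    · obtain ⟨c, hc, q, hsub, hfirst⟩ := ih hb
      refine ⟨c, hc, Walk.cons huw q, ?_, ?_⟩
      · intro v hv
        rw [Walk.support_cons, List.mem_cons] at hv ⊢
        exact hv.imp id (fun h => hsub v h)
      · intro v hv hvX
        rw [Walk.support_cons, List.mem_cons] at hv
        rcases hv with rfl | hv
        · exact absurd hvX hu
        · exact hfirst v hv hvX

lemma DisjConn.symm {G : SimpleGraph V} {S T : Set V} {k : ℕ}
    (h : DisjConn G S T k) : DisjConn G T S k := by
  obtain ⟨u, v, p, h1, h2⟩ := h
  exact ⟨v, u, fun i => (p i).reverse, fun i => ⟨(h1 i).2, (h1 i).1⟩,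
    fun i j hij w hw hw' => h2 i j hij w (by simpa using hw) (by simpa using hw')⟩

lemma DisjConn.mono {G H : SimpleGraph V} {S T : Set V} {k : ℕ}
    (hGH : G ≤ H) (h : DisjConn G S T k) : DisjConn H S T k := by
  obtain ⟨u, v, p, h1, h2⟩ := h
  refine ⟨u, v, fun i => (p i).mapLe hGH, h1, fun i j hij w hw hw' => ?_⟩
  have hs : ∀ i, ((p i).mapLe hGH).support = (p i).support := by
    intro i
    rw [Walk.mapLe, Walk.support_map]
    exact List.map_id _
  rw [hs i] at hw; rw [hs j] at hw'
  exact h2 i j hij w hw hw'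

def cgraph (G : SimpleGraph V) (x y : V) : SimpleGraph V where
  Adj a b := a ≠ b ∧ a ≠ y ∧ b ≠ y ∧
    (G.Adj a b ∨ (a = x ∧ G.Adj y b) ∨ (b = x ∧ G.Adj a y))
  symm := ⟨by
    rintro a b ⟨h1, h2, h3, h4⟩
    refine ⟨h1.symm, h3, h2, ?_⟩
    rcases h4 with h | ⟨rfl, h⟩ | ⟨rfl, h⟩
    · exact Or.inl h.symm
    · exact Or.inr (Or.inr ⟨rfl, h.symm⟩)
    · exact Or.inr (Or.inl ⟨rfl, h.symm⟩)⟩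
  loopless := ⟨fun a h => h.1 rfl⟩

lemma cgraph_adj {G : SimpleGraph V} {x y a b : V} :
    (cgraph G x y).Adj a b ↔ (a ≠ b ∧ a ≠ y ∧ b ≠ y ∧
      (G.Adj a b ∨ (a = x ∧ G.Adj y b) ∨ (b = x ∧ G.Adj a y))) := Iff.rfl

lemma cgraph_edge_ncard_lt [Finite V] {G : SimpleGraph V} {x y : V} (hxy : G.Adj x y) :
    (cgraph G x y).edgeSet.ncard < G.edgeSet.ncard := by
  classical
  set C := cgraph G x y with hCdef
  set σ : V → V := fun a => if a = x then y else a with hσ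
  set φ : Sym2 V → Sym2 V := fun q => if q ∈ G.edgeSet then q else q.map σ with hφ
  have hσinj : ∀ a c : V, a ≠ y → c ≠ y → σ a = σ c → a = c := by
    intro a c ha hc h
    rw [hσ] at h
    simp only at h
    split_ifs at h with h1 h2 h2
    · rw [h1, h2]
    · exact absurd h.symm hc
    · exact absurd h ha
    · exact h
  have hyn : ∀ q ∈ C.edgeSet, ¬ y ∈ q := by
    intro q hq
    induction q with
    | _ a b =>
      rw [mem_edgeSet, hCdef, cgraph_adj] at hq
      rw [Sym2.mem_iff]
      rintro (rfl | rfl)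
      · exact hq.2.1 rfl
      · exact hq.2.2.1 rfl
  have hkey : ∀ q ∈ C.edgeSet, φ q ∈ G.edgeSet \ {s(x, y)} ∧ (q ∉ G.edgeSet → y ∈ φ q) := by
    intro q hq
    induction q with
    | _ a b =>
      have hy := hyn _ hq
      rw [Sym2.mem_iff] at hy
      push_neg at hy
      rw [mem_edgeSet, hCdef, cgraph_adj] at hq
      obtain ⟨hab, hay, hby, hcase⟩ := hq
      by_cases hG : s(a, b) ∈ G.edgeSet
      · have hφq : φ s(a, b) = s(a, b) := by rw [hφ]; simp only [if_pos hG]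
        refine ⟨⟨by rw [hφq]; exact hG, ?_⟩, fun h => absurd hG h⟩
        rw [hφq, Set.mem_singleton_iff]
        intro hmem
        have hm : y ∈ s(a, b) := by rw [hmem]; simp
        rw [Sym2.mem_iff] at hm
        rcases hm with h' | h'
        · exact hy.1 h'
        · exact hy.2 h'
      · have hφq : φ s(a, b) = s(σ a, σ b) := by rw [hφ]; simp only [if_neg hG, Sym2.map_pair_eq]
        rw [mem_edgeSet] at hG
        rcases hcase with h | ⟨hax', h⟩ | ⟨hbx', h⟩
        · exact absurd h hG
        · have hbx : b ≠ x := fun h' => hab (hax'.trans h'.symm)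
          have heq : φ s(a, b) = s(y, b) := by
            rw [hφq, hσ]; simp [hax', hbx]
          refine ⟨⟨by rw [heq]; exact G.mem_edgeSet.mpr h, ?_⟩, fun _ => by rw [heq]; simp⟩
          rw [heq, Set.mem_singleton_iff]
          intro hmem
          have hm : x ∈ s(y, b) := by rw [hmem]; simp
          rw [Sym2.mem_iff] at hm
          rcases hm with h' | h'
          · exact hxy.ne h'
          · exact hbx h'.symm
        · have hax : a ≠ x := fun h' => hab (h'.trans hbx'.symm)
          have heq : φ s(a, b) = s(a, y) := by
            rw [hφq, hσ]; simp [hax, hbx']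
          refine ⟨⟨by rw [heq]; exact G.mem_edgeSet.mpr h, ?_⟩, fun _ => by rw [heq]; simp⟩
          rw [heq, Set.mem_singleton_iff]
          intro hmem
          have hm : x ∈ s(a, y) := by rw [hmem]; simp
          rw [Sym2.mem_iff] at hm
          rcases hm with h' | h'
          · exact hax h'.symm
          · exact hxy.ne h'
  have hinj : Set.InjOn φ C.edgeSet := by
    intro q1 hq1 q2 hq2 heq
    by_cases h1 : q1 ∈ G.edgeSet <;> by_cases h2 : q2 ∈ G.edgeSet
    · have e1 : φ q1 = q1 := by rw [hφ]; simp only [if_pos h1]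
      have e2 : φ q2 = q2 := by rw [hφ]; simp only [if_pos h2]
      rw [e1, e2] at heq; exact heq
    · have e1 : φ q1 = q1 := by rw [hφ]; simp only [if_pos h1]
      have := (hkey q2 hq2).2 h2
      rw [← heq, e1] at this
      exact absurd this (hyn q1 hq1)
    · have e2 : φ q2 = q2 := by rw [hφ]; simp only [if_pos h2]
      have := (hkey q1 hq1).2 h1
      rw [heq, e2] at this
      exact absurd this (hyn q2 hq2)
    · have e1 : φ q1 = q1.map σ := by rw [hφ]; simp only [if_neg h1]
      have e2 : φ q2 = q2.map σ := by rw [hφ]; simp only [if_neg h2]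
      rw [e1, e2] at heq
      have hy1 := hyn q1 hq1
      have hy2 := hyn q2 hq2
      clear e1 e2 hq1 hq2 h1 h2
      induction q1 with
      | _ a b =>
        induction q2 with
        | _ c d =>
          rw [Sym2.mem_iff] at hy1 hy2
          push_neg at hy1 hy2
          rw [Sym2.map_pair_eq, Sym2.map_pair_eq, Sym2.eq_iff] at heq
          rw [Sym2.eq_iff]
          rcases heq with ⟨hac, hbd⟩ | ⟨had, hbc⟩
          · exact Or.inl ⟨hσinj a c (Ne.symm hy1.1) (Ne.symm hy2.1) hac,
              hσinj b d (Ne.symm hy1.2) (Ne.symm hy2.2) hbd⟩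
          · exact Or.inr ⟨hσinj a d (Ne.symm hy1.1) (Ne.symm hy2.2) had,
              hσinj b c (Ne.symm hy1.2) (Ne.symm hy2.1) hbc⟩
  have hle : C.edgeSet.ncard ≤ (G.edgeSet \ {s(x, y)}).ncard :=
    Set.ncard_le_ncard_of_injOn φ (fun q hq => (hkey q hq).1) hinj (Set.toFinite _)
  exact lt_of_le_of_lt hle
    (Set.ncard_diff_singleton_lt_of_mem (G.mem_edgeSet.mpr hxy) (Set.toFinite _))

def cset (S : Set V) (x y : V) : Set V := (S \ {y}) ∪ {v | v = x ∧ y ∈ S}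

lemma mem_cset {S : Set V} {x y v : V} :
    v ∈ cset S x y ↔ (v ∈ S ∧ v ≠ y) ∨ (v = x ∧ y ∈ S) := by
  rw [cset, Set.mem_union, Set.mem_diff, Set.mem_singleton_iff, Set.mem_setOf_eq]

lemma cset_not_y {S : Set V} {x y : V} (hxy : x ≠ y) : y ∉ cset S x y := by
  rw [mem_cset]
  rintro (⟨-, h⟩ | ⟨h, -⟩)
  · exact h rfl
  · exact hxy h.symm

lemma cgraph_lift_walk {G : SimpleGraph V} {x y : V} (hxy : G.Adj x y) {a b : V}
    (q : (cgraph G x y).Walk a b) (ha : a ≠ y) :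
    ∃ w : G.Walk a b, (∀ v ∈ w.support, v ∈ q.support ∨ v = y) ∧
      (y ∈ w.support → x ∈ q.support) := by
  induction q with
  | nil =>
    refine ⟨Walk.nil, by simp, fun h => ?_⟩
    rw [Walk.support_nil, List.mem_singleton] at h
    exact absurd h.symm ha
  | @cons u c d h q ih =>
    obtain ⟨w', hw1, hw2⟩ := ih h.2.2.1
    obtain ⟨hne, huy, hcy, hcase⟩ := h
    rcases hcase with hadj | ⟨hux, hadj⟩ | ⟨hcx, hadj⟩
    rotate_left
    · subst hux
      refine ⟨Walk.cons hxy (Walk.cons hadj w'), fun v hv => ?_, fun _ => Walk.start_mem_support _⟩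
      rw [Walk.support_cons, Walk.support_cons, List.mem_cons, List.mem_cons] at hv
      rcases hv with rfl | rfl | hv
      · exact Or.inl (Walk.start_mem_support _)
      · exact Or.inr rfl
      · rcases hw1 v hv with h' | h'
        · exact Or.inl (List.mem_cons_of_mem _ h')
        · exact Or.inr h'
    · subst hcx
      refine ⟨Walk.cons hadj (Walk.cons hxy.symm w'), fun v hv => ?_, fun _ => ?_⟩
      · rw [Walk.support_cons, Walk.support_cons, List.mem_cons, List.mem_cons] at hv
        rcases hv with rfl | rfl | hv
        · exact Or.inl (Walk.start_mem_support _)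
        · exact Or.inr rfl
        · rcases hw1 v hv with h' | h'
          · exact Or.inl (List.mem_cons_of_mem _ h')
          · exact Or.inr h'
      · show c ∈ u :: q.support
        exact List.mem_cons_of_mem _ (Walk.start_mem_support _)
    · refine ⟨Walk.cons hadj w', fun v hv => ?_, fun hy => ?_⟩
      · rw [Walk.support_cons, List.mem_cons] at hv
        rcases hv with rfl | hv
        · exact Or.inl (Walk.start_mem_support _)
        · rcases hw1 v hv with h' | h'
          · exact Or.inl (List.mem_cons_of_mem _ h')
          · exact Or.inr h'
      · rw [Walk.support_cons, List.mem_cons] at hy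
        rcases hy with hy | hy
        · exact absurd hy.symm huy
        · exact List.mem_cons_of_mem _ (hw2 hy)

lemma cgraph_lift {G : SimpleGraph V} {x y : V} (hxy : G.Adj x y) {S T : Set V}
    {a b : V} (ha : a ∈ cset S x y) (hb : b ∈ cset T x y)
    (q : (cgraph G x y).Walk a b) :
    ∃ (c d : V) (w : G.Walk c d), c ∈ S ∧ d ∈ T ∧
      (∀ v ∈ w.support, v ∈ q.support ∨ v = y) ∧ (y ∈ w.support → x ∈ q.support) := by
  have hay : a ≠ y := fun h => cset_not_y hxy.ne (h ▸ ha)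
  have hby : b ≠ y := fun h => cset_not_y hxy.ne (h ▸ hb)
  obtain ⟨w, hw1, hw2⟩ := cgraph_lift_walk hxy q hay
  -- adjust the start
  have hstart : ∃ (c : V) (w' : G.Walk c b), c ∈ S ∧
      (∀ v ∈ w'.support, v ∈ q.support ∨ v = y) ∧ (y ∈ w'.support → x ∈ q.support) := by
    by_cases haS : a ∈ S
    · exact ⟨a, w, haS, hw1, hw2⟩
    · rw [mem_cset] at ha
      rcases ha with ⟨h1, -⟩ | ⟨hax, hyS⟩
      · exact absurd h1 haS
      · subst hax
        refine ⟨y, Walk.cons hxy.symm w, hyS, fun v hv => ?_, fun _ => Walk.start_mem_support _⟩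
        rw [Walk.support_cons, List.mem_cons] at hv
        rcases hv with rfl | hv
        · exact Or.inr rfl
        · exact hw1 v hv
  obtain ⟨c, w', hcS, hw1', hw2'⟩ := hstart
  by_cases hbT : b ∈ T
  · exact ⟨c, b, w', hcS, hbT, hw1', hw2'⟩
  · rw [mem_cset] at hb
    rcases hb with ⟨h1, -⟩ | ⟨hbx, hyT⟩
    · exact absurd h1 hbT
    · subst hbx
      refine ⟨c, y, w'.append (Walk.cons hxy Walk.nil), hcS, hyT, fun v hv => ?_,
        fun _ => Walk.end_mem_support _⟩
      rw [Walk.mem_support_append_iff] at hv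
      rcases hv with hv | hv
      · exact hw1' v hv
      · rw [Walk.support_cons, Walk.support_nil, List.mem_cons, List.mem_singleton] at hv
        rcases hv with rfl | rfl
        · exact Or.inl (Walk.end_mem_support q)
        · exact Or.inr rfl

lemma cgraph_walk_avoid_y {G : SimpleGraph V} {x y a b : V}
    (p : (cgraph G x y).Walk a b) (ha : a ≠ y) : y ∉ p.support := by
  induction p with
  | nil =>
    simp only [Walk.support_nil, List.mem_singleton]
    exact fun h => ha h.symm
  | @cons u w c h p ih =>
    rw [Walk.support_cons, List.mem_cons]
    rintro (rfl | hy)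
    · exact ha rfl
    · exact ih h.2.2.1 hy


/-- Projection of a `G`-walk to the contracted graph. -/
lemma cgraph_proj {G : SimpleGraph V} {x y : V} (hxy : G.Adj x y) {a b : V}
    (p : G.Walk a b) :
    ∃ q : (cgraph G x y).Walk (if a = y then x else a) (if b = y then x else b),
      ∀ w ∈ q.support, ∃ u ∈ p.support, (if u = y then x else u) = w := by
  induction p with
  | nil => exact ⟨Walk.nil, by simp⟩
  | @cons u c d h p ih =>
    obtain ⟨q, hq⟩ := ih
    by_cases hec : (if u = y then x else u) = (if c = y then x else c)
    · refine ⟨q.copy hec.symm rfl, fun w hw => ?_⟩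
      rw [Walk.support_copy] at hw
      obtain ⟨z, hz, hz'⟩ := hq w hw
      exact ⟨z, by simp [hz], hz'⟩
    · have hadj : (cgraph G x y).Adj (if u = y then x else u) (if c = y then x else c) := by
        refine ⟨hec, ?_, ?_, ?_⟩
        · split_ifs with h
          · exact hxy.ne
          · exact h
        · split_ifs with h
          · exact hxy.ne
          · exact h
        · by_cases hu : u = y
          · by_cases hc : c = y
            · subst hu; subst hc; exact absurd h (G.loopless.irrefl _)
            · subst hu
              simp only [if_pos rfl, if_neg hc]
              exact Or.inr (Or.inl ⟨rfl, h⟩)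
          · by_cases hc : c = y
            · subst hc
              simp only [if_neg hu, if_pos rfl]
              exact Or.inr (Or.inr ⟨rfl, h⟩)
            · simp only [if_neg hu, if_neg hc]
              exact Or.inl h
      refine ⟨Walk.cons hadj q, fun w hw => ?_⟩
      rw [Walk.support_cons, List.mem_cons] at hw
      rcases hw with rfl | hw
      · exact ⟨u, by simp, rfl⟩
      · obtain ⟨z, hz, hz'⟩ := hq w hw
        exact ⟨z, by simp [hz], hz'⟩


/-- A `G`-walk avoiding `y` is a walk in the contracted graph. -/
lemma cgraph_of_avoid_y {G : SimpleGraph V} {x y a b : V} (p : G.Walk a b)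
    (hy : y ∉ p.support) :
    ∃ q : (cgraph G x y).Walk a b, q.support = p.support := by
  induction p with
  | nil => exact ⟨Walk.nil, rfl⟩
  | @cons u c d h p ih =>
    rw [Walk.support_cons, List.mem_cons] at hy
    push_neg at hy
    obtain ⟨q, hq⟩ := ih hy.2
    have hadj : (cgraph G x y).Adj u c := by
      refine ⟨h.ne, fun h' => hy.1 h'.symm, ?_, Or.inl h⟩
      intro h'
      exact hy.2 (h' ▸ p.start_mem_support)
    exact ⟨Walk.cons hadj q, by rw [Walk.support_cons, hq, Walk.support_cons]⟩

lemma cgraph_disjconn_lift {G : SimpleGraph V} {x y : V} (hxy : G.Adj x y)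
    {S T : Set V} {k : ℕ}
    (h : DisjConn (cgraph G x y) (cset S x y) (cset T x y) k) : DisjConn G S T k := by
  obtain ⟨u, v, p, h1, h2⟩ := h
  have key := fun i => cgraph_lift hxy (h1 i).1 (h1 i).2 (p i)
  choose c d w hc hd hsub hyx using key
  refine ⟨c, d, w, fun i => ⟨hc i, hd i⟩, fun i j hij z hzi hzj => ?_⟩
  by_cases hzy : z = y
  · subst hzy
    exact h2 i j hij x (hyx i hzi) (hyx j hzj)
  · rcases hsub i z hzi with h' | h'
    · rcases hsub j z hzj with h'' | h''
      · exact h2 i j hij z h' h''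
      · exact hzy h''
    · exact hzy h'


lemma disjConn_normalize {H : SimpleGraph V} {S X : Set V} {k : ℕ}
    (h : DisjConn H S X k) :
    ∃ (u w : Fin k → V) (P : ∀ i, H.Walk (u i) (w i)),
      (∀ i, (P i).IsPath ∧ u i ∈ S ∧ w i ∈ X ∧
        (∀ v ∈ (P i).support, v ∈ X → v = w i)) ∧
      (∀ i j, i ≠ j → ∀ z, z ∈ (P i).support → z ∉ (P j).support) := by
  obtain ⟨u, v, p, h1, h2⟩ := h
  have key := fun i => exists_firstHit (p i) (h1 i).2
  choose w hwX P hPsub hPfirst using key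
  refine ⟨u, w, fun i => (P i).bypass, fun i => ⟨Walk.bypass_isPath _, (h1 i).1, hwX i, ?_⟩,
    fun i j hij z hzi hzj => ?_⟩
  · intro v hv hvX
    exact hPfirst i v (Walk.support_bypass_subset _ hv) hvX
  · exact h2 i j hij z (hPsub i z (Walk.support_bypass_subset _ hzi))
      (hPsub j z (Walk.support_bypass_subset _ hzj))

lemma not_start_mem_dropUntil_tail {H : SimpleGraph V} {a b z : V} (P : H.Walk a b)
    (hP : P.IsPath) (hz : z ∈ P.support) (hza : z ≠ a) : a ∉ (P.dropUntil z hz).support := by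
  have hspec := P.take_spec hz
  have hnd : (P.support).Nodup := hP.support_nodup
  rw [← hspec, Walk.support_append, List.nodup_append] at hnd
  intro hmem
  rw [Walk.support_eq_cons, List.mem_cons] at hmem
  rcases hmem with h' | h'
  · exact hza h'.symm
  · exact hnd.2.2 _ (Walk.start_mem_support _) _ h' rfl

lemma not_end_mem_takeUntil {H : SimpleGraph V} {a b z : V} (P : H.Walk a b)
    (hP : P.IsPath) (hz : z ∈ P.support) (hzb : z ≠ b) : b ∉ (P.takeUntil z hz).support := by
  have hspec := P.take_spec hz
  have hnd : (P.support).Nodup := hP.support_nodup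
  rw [← hspec, Walk.support_append, List.nodup_append] at hnd
  intro hmem
  have hb2 : b ∈ (P.dropUntil z hz).support := Walk.end_mem_support _
  rw [Walk.support_eq_cons, List.mem_cons] at hb2
  rcases hb2 with h' | h'
  · exact hzb h'.symm
  · exact hnd.2.2 _ hmem _ h' rfl

lemma disjConn_glue [Finite V] {H : SimpleGraph V} {S T X : Set V} {k : ℕ}
    (hsep : Separates H S T X) (hcard : X.ncard = k)
    (hS : DisjConn H S X k) (hT : DisjConn H X T k) : DisjConn H S T k := by
  classical
  obtain ⟨u, w, P, hP1, hP2⟩ := disjConn_normalize hS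
  obtain ⟨v, w', Q0, hQ1, hQ2⟩ := disjConn_normalize hT.symm
  set Q : ∀ j, H.Walk (w' j) (v j) := fun j => (Q0 j).reverse with hQdef
  have hQsupp : ∀ j, (Q j).support = (Q0 j).support.reverse := fun j => Walk.support_reverse _
  have hQmem : ∀ j z, z ∈ (Q j).support ↔ z ∈ (Q0 j).support := by
    intro j z; rw [hQsupp]; exact List.mem_reverse
  -- injectivity of the endpoint maps
  have hwinj : Function.Injective w := by
    intro i j hij
    by_contra hne
    exact hP2 i j hne (w i) (Walk.end_mem_support _)
      (by rw [hij]; exact Walk.end_mem_support _)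
  have hw'inj : Function.Injective w' := by
    intro i j hij
    by_contra hne
    exact hQ2 i j hne (w' i) (Walk.end_mem_support _)
      (by rw [hij]; exact Walk.end_mem_support _)
  -- bijection with X
  have hXfin : Fintype ↥X := Fintype.ofFinite _
  have hXcard : Fintype.card ↥X = k := by
    rw [← Nat.card_eq_fintype_card, Nat.card_coe_set_eq, hcard]
  set wb : Fin k → ↥X := fun i => ⟨w i, (hP1 i).2.2.1⟩ with hwb
  set wb' : Fin k → ↥X := fun i => ⟨w' i, (hQ1 i).2.2.1⟩ with hwb'
  have hwbinj : Function.Injective wb := by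
    intro i j hij
    exact hwinj (congrArg Subtype.val hij)
  have hwb'inj : Function.Injective wb' := by
    intro i j hij
    exact hw'inj (congrArg Subtype.val hij)
  have hwb'bij : Function.Bijective wb' := by
    rw [Fintype.bijective_iff_injective_and_card]
    exact ⟨hwb'inj, by rw [hXcard, Fintype.card_fin]⟩
  set E := Equiv.ofBijective wb' hwb'bij with hE
  set σ : Fin k → Fin k := fun i => E.symm (wb i) with hσ
  have hσinj : Function.Injective σ := fun i j hij => hwbinj (by
    have := congrArg E hij
    rw [Equiv.apply_symm_apply, Equiv.apply_symm_apply] at this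
    exact this)
  have hmatch : ∀ i, w' (σ i) = w i := by
    intro i
    have : E (σ i) = wb i := Equiv.apply_symm_apply _ _
    exact congrArg Subtype.val this
  -- the glued walks
  set R : ∀ i, H.Walk (u i) (v (σ i)) :=
    fun i => (P i).append ((Q (σ i)).copy (hmatch i) rfl) with hR
  have hRsupp : ∀ i z, z ∈ (R i).support ↔ z ∈ (P i).support ∨ z ∈ (Q (σ i)).support := by
    intro i z
    rw [hR]
    simp only [Walk.mem_support_append_iff, Walk.support_copy]
  -- key cross lemma
  have hcross : ∀ i j z, z ∈ (P i).support → z ∈ (Q j).support → z = w i ∧ z = w' j := by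
    intro i j z hzi hzj
    by_cases hzX : z ∈ X
    · exact ⟨(hP1 i).2.2.2 z hzi hzX, (hQ1 j).2.2.2 z ((hQmem j z).mp hzj) hzX⟩
    · exfalso
      have hzw : z ≠ w i := fun h => hzX (h ▸ (hP1 i).2.2.1)
      have hzw' : z ≠ w' j := fun h => hzX (h ▸ (hQ1 j).2.2.1)
      set B := ((P i).takeUntil z hzi).append ((Q j).dropUntil z hzj) with hB
      obtain ⟨m, hmB, hmX⟩ := hsep (hP1 i).2.1 (hQ1 j).2.1 B
      rw [hB, Walk.mem_support_append_iff] at hmB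
      rcases hmB with hm | hm
      · have hmP : m ∈ (P i).support := Walk.support_takeUntil_subset _ hzi hm
        have := (hP1 i).2.2.2 m hmP hmX
        subst this
        exact not_end_mem_takeUntil (P i) (hP1 i).1 hzi hzw hm
      · have hmQ : m ∈ (Q j).support := Walk.support_dropUntil_subset _ hzj hm
        have := (hQ1 j).2.2.2 m ((hQmem j m).mp hmQ) hmX
        subst this
        have hQpath : (Q j).IsPath := (Walk.isPath_reverse_iff _).mpr (hQ1 j).1
        exact not_start_mem_dropUntil_tail (Q j) hQpath hzj hzw' hm
  refine ⟨u, fun i => v (σ i), R, fun i => ⟨(hP1 i).2.1, (hQ1 (σ i)).2.1⟩,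
    fun i j hij z hzi hzj => ?_⟩
  rw [hRsupp] at hzi hzj
  rcases hzi with hzi | hzi <;> rcases hzj with hzj | hzj
  · exact hP2 i j hij z hzi hzj
  · obtain ⟨h1', h2'⟩ := hcross i (σ j) z hzi hzj
    rw [hmatch j] at h2'
    exact hij (hwinj (h1' ▸ h2'))
  · obtain ⟨h1', h2'⟩ := hcross j (σ i) z hzj hzi
    rw [hmatch i] at h2'
    exact hij (hwinj (h2' ▸ h1' : w i = w j))
  · exact hQ2 (σ i) (σ j) (fun h => hij (hσinj h)) z
      ((hQmem _ z).mp hzi) ((hQmem _ z).mp hzj)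


lemma support_mapLe_eq {G H : SimpleGraph V} (h : G ≤ H) {a b : V} (p : G.Walk a b) :
    (p.mapLe h).support = p.support := by
  rw [Walk.mapLe, Walk.support_map]
  exact List.map_id _

lemma disjConn_of_inter_ncard [Finite V] {G : SimpleGraph V} {S T : Set V} {k : ℕ}
    (h : k ≤ (S ∩ T).ncard) : DisjConn G S T k := by
  obtain ⟨t, hts, htcard⟩ := Set.exists_subset_card_eq h
  have : Fintype ↥t := Fintype.ofFinite _
  have hcard : Fintype.card ↥t = k := by
    rw [← Nat.card_eq_fintype_card, Nat.card_coe_set_eq, htcard]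
  set e : Fin k → ↥t := fun i => (Fintype.equivFinOfCardEq hcard).symm i with he
  refine ⟨fun i => (e i : V), fun i => (e i : V), fun _ => Walk.nil,
    fun i => ⟨(hts (e i).2).1, (hts (e i).2).2⟩, fun i j hij z hzi hzj => ?_⟩
  rw [Walk.support_nil, List.mem_singleton] at hzi hzj
  exact hij ((Fintype.equivFinOfCardEq hcard).symm.injective
    (Subtype.ext ((hzi.symm.trans hzj : ((e i : V)) = (e j : V)))))

theorem menger_aux [Finite V] :
    ∀ (n : ℕ) (G : SimpleGraph V) (S T : Set V) (k : ℕ),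
      G.edgeSet.ncard ≤ n →
      (∀ X : Set V, Separates G S T X → k ≤ X.ncard) → DisjConn G S T k := by
  intro n
  induction n with
  | zero =>
    intro G S T k hcard hk
    have hemp : G.edgeSet = ∅ := (Set.ncard_eq_zero (Set.toFinite _)).mp (Nat.le_zero.mp hcard)
    apply disjConn_of_inter_ncard
    apply hk
    intro a b haS hbT p
    cases p with
    | nil => exact ⟨a, Walk.start_mem_support _, ⟨haS, hbT⟩⟩
    | cons h _ =>
      exfalso
      have := G.mem_edgeSet.mpr h
      rw [hemp] at this
      exact this
  | succ n ih =>
    intro G S T k hcard hk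
    by_cases hE : G.edgeSet.ncard ≤ n
    · exact ih G S T k hE hk
    obtain ⟨x, y, hxy⟩ : ∃ x y, G.Adj x y := by
      have hne : G.edgeSet.Nonempty := by
        rw [Set.nonempty_iff_ne_empty]
        intro h
        exact hE (by rw [h, Set.ncard_empty]; omega)
      obtain ⟨e, he⟩ := hne
      exact Sym2.ind (fun a b h => ⟨a, b, G.mem_edgeSet.mp h⟩) e he
    set H := G.deleteEdges {s(x, y)} with hHdef
    have hHle : H ≤ G := G.deleteEdges_le _
    have hHedge : H.edgeSet = G.edgeSet \ {s(x, y)} := edgeSet_deleteEdges _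
    have hHcard : H.edgeSet.ncard ≤ n := by
      rw [hHedge]
      have := Set.ncard_diff_singleton_lt_of_mem (G.mem_edgeSet.mpr hxy) (Set.toFinite _)
      omega
    have hG'card : (cgraph G x y).edgeSet.ncard ≤ n := by
      have h1 := cgraph_edge_ncard_lt hxy
      omega
    by_cases hcut : ∀ W : Set V,
        Separates (cgraph G x y) (cset S x y) (cset T x y) W → k ≤ W.ncard
    · exact cgraph_disjconn_lift hxy (ih (cgraph G x y) _ _ k hG'card hcut)
    push_neg at hcut
    obtain ⟨W0, hW0sep, hW0card⟩ := hcut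
    set W := W0 \ {y} with hWdef
    have hWcard : W.ncard < k :=
      lt_of_le_of_lt (Set.ncard_le_ncard Set.diff_subset (Set.toFinite _)) hW0card
    have hWsep : Separates (cgraph G x y) (cset S x y) (cset T x y) W := by
      intro a b haS hbT p
      obtain ⟨m, hm, hmW⟩ := hW0sep haS hbT p
      have hay : a ≠ y := fun h => cset_not_y hxy.ne (h ▸ haS)
      have hmy : m ≠ y := fun h => cgraph_walk_avoid_y p hay (h ▸ hm)
      exact ⟨m, hm, ⟨hmW, hmy⟩⟩
    have hxW : x ∈ W := by
      by_contra hxW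
      refine absurd (hk W ?_) (not_le.mpr hWcard)
      intro a b haS hbT p
      obtain ⟨q, hq⟩ := cgraph_proj hxy p
      have haS' : (if a = y then x else a) ∈ cset S x y := by
        split_ifs with h
        · exact mem_cset.mpr (Or.inr ⟨rfl, h ▸ haS⟩)
        · exact mem_cset.mpr (Or.inl ⟨haS, h⟩)
      have hbT' : (if b = y then x else b) ∈ cset T x y := by
        split_ifs with h
        · exact mem_cset.mpr (Or.inr ⟨rfl, h ▸ hbT⟩)
        · exact mem_cset.mpr (Or.inl ⟨hbT, h⟩)
      obtain ⟨m, hm, hmW⟩ := hWsep haS' hbT' q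
      obtain ⟨um, hum, hfum⟩ := hq m hm
      have humy : um ≠ y := by
        intro h
        rw [if_pos h] at hfum
        exact hxW (hfum ▸ hmW)
      rw [if_neg humy] at hfum
      exact ⟨um, hum, hfum ▸ hmW⟩
    set X := W ∪ {y} with hXdef
    have hyX : y ∈ X := Or.inr rfl
    have hxX : x ∈ X := Or.inl hxW
    have hXsep : Separates G S T X := by
      intro a b haS hbT p
      by_cases hyP : y ∈ p.support
      · exact ⟨y, hyP, hyX⟩
      · have hay : a ≠ y := fun h => hyP (h ▸ Walk.start_mem_support p)
        have hby : b ≠ y := fun h => hyP (h ▸ Walk.end_mem_support p)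
        obtain ⟨q, hq⟩ := cgraph_of_avoid_y p hyP
        obtain ⟨m, hm, hmW⟩ := hWsep (mem_cset.mpr (Or.inl ⟨haS, hay⟩))
          (mem_cset.mpr (Or.inl ⟨hbT, hby⟩)) q
        exact ⟨m, by rw [← hq]; exact hm, Or.inl hmW⟩
    have hXcard : X.ncard = k := by
      have h1 : k ≤ X.ncard := hk X hXsep
      have h2 : X.ncard ≤ W.ncard + 1 := by
        rw [hXdef, Set.union_singleton]
        exact Set.ncard_insert_le _ _
      omega
    have hfirstside : ∀ Z : Set V, Separates H S X Z → Separates G S T Z := by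
      intro Z hZ a b haS hbT p
      obtain ⟨m0, hm0, hm0X⟩ := hXsep haS hbT p
      obtain ⟨c, hcX, q, hqsub, hqfirst⟩ := exists_firstHit (p.takeUntil m0 hm0) hm0X
      have hqsub' : ∀ z ∈ q.support, z ∈ p.support := fun z hz =>
        Walk.support_takeUntil_subset _ hm0 (hqsub z hz)
      have hqH : ∀ f ∈ q.edges, f ∈ H.edgeSet := by
        intro f hf
        rw [hHedge]
        refine ⟨q.edges_subset_edgeSet hf, ?_⟩
        intro hfe
        rw [Set.mem_singleton_iff] at hfe
        subst hfe
        have hx' := hqfirst x (q.fst_mem_support_of_mem_edges hf) hxX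
        have hy' := hqfirst y (q.snd_mem_support_of_mem_edges hf) hyX
        exact hxy.ne (hx'.trans hy'.symm)
      obtain ⟨m, hm, hmZ⟩ := hZ haS hcX (q.transfer H hqH)
      rw [Walk.support_transfer] at hm
      exact ⟨m, hqsub' m hm, hmZ⟩
    have hsecondside : ∀ Z : Set V, Separates H X T Z → Separates G S T Z := by
      intro Z hZ a b haS hbT p
      obtain ⟨m0, hm0, hm0X⟩ := hXsep haS hbT p
      have hm0' : m0 ∈ p.reverse.support := by
        rw [Walk.support_reverse]
        exact List.mem_reverse.mpr hm0
      obtain ⟨c, hcX, q, hqsub, hqfirst⟩ := exists_firstHit (p.reverse.takeUntil m0 hm0') hm0X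
      have hqsub' : ∀ z ∈ q.support, z ∈ p.support := by
        intro z hz
        have := Walk.support_takeUntil_subset _ hm0' (hqsub z hz)
        rw [Walk.support_reverse] at this
        exact List.mem_reverse.mp this
      have hqH : ∀ f ∈ q.edges, f ∈ H.edgeSet := by
        intro f hf
        rw [hHedge]
        refine ⟨q.edges_subset_edgeSet hf, ?_⟩
        intro hfe
        rw [Set.mem_singleton_iff] at hfe
        subst hfe
        have hx' := hqfirst x (q.fst_mem_support_of_mem_edges hf) hxX
        have hy' := hqfirst y (q.snd_mem_support_of_mem_edges hf) hyX
        exact hxy.ne (hx'.trans hy'.symm)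
      obtain ⟨m, hm, hmZ⟩ := hZ hcX hbT ((q.transfer H hqH).reverse)
      rw [Walk.support_reverse, List.mem_reverse, Walk.support_transfer] at hm
      exact ⟨m, hqsub' m hm, hmZ⟩
    have hDS : DisjConn H S X k := ih H S X k hHcard (fun Z hZ => hk Z (hfirstside Z hZ))
    have hDT : DisjConn H X T k := ih H X T k hHcard (fun Z hZ => hk Z (hsecondside Z hZ))
    have hHsepX : Separates H S T X := by
      intro a b haS hbT p
      obtain ⟨m, hm, hmX⟩ := hXsep haS hbT (p.mapLe hHle)
      rw [support_mapLe_eq] at hm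
      exact ⟨m, hm, hmX⟩
    exact DisjConn.mono hHle (disjConn_glue hHsepX hXcard hDS hDT)

end MengerDev

/-- Lemma 4.1: given a bramble of order at least `ℓ` and two disjoint vertex
sets `S`, `T` each met by all members of some subbramble of order at least `ℓ`,
there are `ℓ` pairwise vertex-disjoint `S`–`T` paths. -/
theorem disjoint_paths_of_bramble {V : Type*} [Finite V] (G : SimpleGraph V)
    (B : Set (Set V)) (hB : IsBramble G B) (ℓ : ℕ) (hord : ℓ ≤ brambleOrder B)
    (S T : Set V) (hdisj : Disjoint S T)
    (hS : ∃ B₁ ⊆ B, ℓ ≤ brambleOrder B₁ ∧ ∀ b ∈ B₁, (b ∩ S).Nonempty)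
    (hT : ∃ B₂ ⊆ B, ℓ ≤ brambleOrder B₂ ∧ ∀ b ∈ B₂, (b ∩ T).Nonempty) :
    ∃ (u v : Fin ℓ → V) (p : ∀ i, G.Walk (u i) (v i)),
      (∀ i, (p i).IsPath ∧ u i ∈ S ∧ v i ∈ T) ∧
      ∀ i j, i ≠ j → ∀ w, w ∈ (p i).support → w ∉ (p j).support := by
  classical
  obtain ⟨B₁, hB₁B, hB₁ord, hB₁S⟩ := hS
  obtain ⟨B₂, hB₂B, hB₂ord, hB₂T⟩ := hT
  have hk : ∀ X : Set V, Separates G S T X → ℓ ≤ X.ncard := by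
    intro X hXsep
    by_contra hlt
    push_neg at hlt
    have hmiss : ∀ B' : Set (Set V), ℓ ≤ brambleOrder B' → ∃ b ∈ B', b ∩ X = ∅ := by
      intro B' hB'
      by_contra h
      push_neg at h
      have hhits : HitsAll B' X := fun b hb => h b hb
      have : brambleOrder B' ≤ X.ncard := Nat.sInf_le ⟨X, Set.toFinite _, hhits, rfl⟩
      omega
    obtain ⟨b₁, hb₁, hb₁X⟩ := hmiss B₁ hB₁ord
    obtain ⟨b₂, hb₂, hb₂X⟩ := hmiss B₂ hB₂ord
    obtain ⟨s, hsb, hsS⟩ := hB₁S b₁ hb₁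
    obtain ⟨t, htb, htT⟩ := hB₂T b₂ hb₂
    have hconn := hB.2 b₁ (hB₁B hb₁) b₂ (hB₂B hb₂)
    have hreach := hconn.preconnected ⟨s, Or.inl hsb⟩ ⟨t, Or.inr htb⟩
    obtain ⟨pw⟩ := hreach
    let hom : G.induce (b₁ ∪ b₂) →g G := ⟨Subtype.val, fun {a c} h => h⟩
    obtain ⟨m, hm, hmX⟩ := hXsep hsS htT (pw.map hom)
    rw [Walk.support_map, List.mem_map] at hm
    obtain ⟨⟨mv, hmv⟩, hmem, hval⟩ := hm
    have hmvX : mv ∈ X := by rw [← hval] at hmX; exact hmX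
    rcases hmv with h1 | h1
    · exact Set.eq_empty_iff_forall_notMem.mp hb₁X mv ⟨h1, hmvX⟩
    · exact Set.eq_empty_iff_forall_notMem.mp hb₂X mv ⟨h1, hmvX⟩
  obtain ⟨u, v, p, h1, h2⟩ := menger_aux G.edgeSet.ncard G S T ℓ le_rfl hk
  refine ⟨u, v, fun i => (p i).bypass,
    fun i => ⟨Walk.bypass_isPath _, (h1 i).1, (h1 i).2⟩, fun i j hij z hzi hzj => ?_⟩
  exact h2 i j hij z (Walk.support_bypass_subset _ hzi) (Walk.support_bypass_subset _ hzj)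
end

section
/- For all integers a, b ≥ 2, the a × b grid graph contains a cycle of length at least ab − 1. More precisely, either the a × b grid has a Hamiltonian cycle, or the graph obtained from it by deleting one corner vertex has a Hamiltonian cycle. -/
open SimpleGraph

/-- The `a × b` grid graph on `Fin a × Fin b`. -/
def gridGraph (a b : ℕ) : SimpleGraph (Fin a × Fin b) :=
  SimpleGraph.fromRel fun p q =>
    (p.1 = q.1 ∧ p.2.val + 1 = q.2.val) ∨ (p.2 = q.2 ∧ p.1.val + 1 = q.1.val)

/-- The corner vertices of the `a × b` grid. -/
def GridCorner (a b : ℕ) (c : Fin a × Fin b) : Prop :=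
  (c.1.val = 0 ∨ c.1.val = a - 1) ∧ (c.2.val = 0 ∨ c.2.val = b - 1)

open List

section Aux

variable {V : Type*} [DecidableEq V] {G : SimpleGraph V}

/-- Build a walk from a nonempty list whose consecutive entries are adjacent. -/
def walkOfChain : (l : List V) → l.Chain' G.Adj → (h : l ≠ []) → G.Walk (l.head h) (l.getLast h)
  | [x], _, _ => Walk.nil
  | x :: y :: r, hc, _ =>
    Walk.cons (List.isChain_cons_cons.1 hc).1
      ((walkOfChain (y :: r) (List.isChain_cons_cons.1 hc).2 (by simp)).copy rfl
        (List.getLast_cons (by simp)).symm)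

@[simp] lemma support_walkOfChain : ∀ (l : List V) (hc : l.Chain' G.Adj) (h : l ≠ []),
    (walkOfChain l hc h).support = l
  | [x], _, _ => rfl
  | x :: y :: r, hc, h => by
    rw [walkOfChain]
    show _ :: _ = _
    have e := Walk.support_copy (walkOfChain (y :: r) (List.isChain_cons_cons.1 hc).2 (by simp))
      rfl (List.getLast_cons (a := x) (by simp)).symm
    exact congrArg₂ List.cons rfl (e.trans (support_walkOfChain _ _ _))

lemma nodup_of_forall_mem_length [Fintype V] (l : List V) (hall : ∀ v, v ∈ l)
    (hlen : l.length = Fintype.card V) : l.Nodup := by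
  have hsub : l.dedup.Sublist l := l.dedup_sublist
  have h2 : Fintype.card V ≤ l.dedup.length := by
    have : (Finset.univ : Finset V) ⊆ l.dedup.toFinset := by
      intro v _; simp [List.mem_dedup, hall v]
    simpa [List.toFinset_card_of_nodup l.nodup_dedup] using Finset.card_le_card this
  have : l.dedup = l := hsub.eq_of_length (le_antisymm hsub.length_le (hlen ▸ h2))
  rw [← this]; exact l.nodup_dedup

omit [DecidableEq V] in
lemma closing_edge_not_mem {u v : V} (P : G.Walk u v) (hnd : P.support.Nodup)
    (hlen : 2 ≤ P.length) : s(v, u) ∉ P.edges := by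
  cases P with
  | nil => simp
  | @cons _ w _ h Q =>
    rw [Walk.support_cons, List.nodup_cons] at hnd
    rw [Walk.edges_cons, List.mem_cons]
    rintro (heq | hmem)
    · rw [Sym2.eq_iff] at heq
      rcases heq with ⟨rfl, rfl⟩ | ⟨rfl, -⟩
      · exact hnd.1 Q.end_mem_support
      · have : Q.IsPath := Walk.IsPath.mk' hnd.2
        have h2 : Q = Walk.nil := congrArg Subtype.val (SimpleGraph.Path.loop_eq ⟨Q, this⟩)
        subst h2; simp at hlen
    · exact hnd.1 (Walk.snd_mem_support_of_mem_edges Q hmem)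

lemma exists_hamCycle_of_list [Fintype V] (l : List V) (h3 : 3 ≤ l.length)
    (hc : l.Chain' G.Adj)
    (hcl : G.Adj (l.getLast (by rintro rfl; simp at h3)) (l.head (by rintro rfl; simp at h3)))
    (hlen : l.length = Fintype.card V) (hall : ∀ v, v ∈ l) :
    ∃ (v : V) (p : G.Walk v v), p.IsHamiltonianCycle := by
  have hne : l ≠ [] := by rintro rfl; simp at h3
  have hnd : l.Nodup := nodup_of_forall_mem_length l hall hlen
  set P : G.Walk (l.head hne) (l.getLast hne) := walkOfChain l hc hne with hP
  have hsupp : P.support = l := support_walkOfChain l hc hne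
  have hpath : P.IsPath := Walk.IsPath.mk' (by rw [hsupp]; exact hnd)
  have hlenP : 2 ≤ P.length := by
    have := P.length_support
    rw [hsupp] at this
    omega
  have hnotedge : s(l.getLast hne, l.head hne) ∉ P.edges :=
    closing_edge_not_mem P (by rw [hsupp]; exact hnd) hlenP
  have hcyc : (Walk.cons hcl P).IsCycle :=
    SimpleGraph.Path.cons_isCycle ⟨P, hpath⟩ hcl hnotedge
  refine ⟨_, Walk.cons hcl P, ?_⟩
  rw [Walk.isHamiltonianCycle_iff_isCycle_and_support_count_tail_eq_one]
  refine ⟨hcyc, fun v => ?_⟩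
  rw [Walk.support_cons, List.tail_cons, hsupp]
  exact List.count_eq_one_of_mem hnd (hall v)

namespace GridAux

/-- step relation on ℕ × ℕ -/
def R : ℕ × ℕ → ℕ × ℕ → Prop := fun p q =>
  (p.1 = q.1 ∧ (p.2 + 1 = q.2 ∨ q.2 + 1 = p.2)) ∨
  (p.2 = q.2 ∧ (p.1 + 1 = q.1 ∨ q.1 + 1 = p.1))

def toV (a b : ℕ) (ha : 0 < a) (hb : 0 < b) (p : ℕ × ℕ) : Fin a × Fin b :=
  (⟨p.1 % a, Nat.mod_lt _ ha⟩, ⟨p.2 % b, Nat.mod_lt _ hb⟩)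

lemma adj_toV {a b : ℕ} (ha : 0 < a) (hb : 0 < b) {p q : ℕ × ℕ}
    (hp1 : p.1 < a) (hp2 : p.2 < b) (hq1 : q.1 < a) (hq2 : q.2 < b) (h : R p q) :
    (gridGraph a b).Adj (toV a b ha hb p) (toV a b ha hb q) := by
  simp only [gridGraph, SimpleGraph.fromRel_adj, toV, Ne, Prod.ext_iff, Fin.ext_iff,
    Nat.mod_eq_of_lt hp1, Nat.mod_eq_of_lt hp2, Nat.mod_eq_of_lt hq1, Nat.mod_eq_of_lt hq2]
  rcases h with ⟨h1, h2⟩ | ⟨h1, h2⟩ <;> constructor <;> omega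

lemma toV_inj {a b : ℕ} (ha : 0 < a) (hb : 0 < b) {p q : ℕ × ℕ}
    (hp1 : p.1 < a) (hp2 : p.2 < b) (hq1 : q.1 < a) (hq2 : q.2 < b)
    (h : toV a b ha hb p = toV a b ha hb q) : p = q := by
  simp only [toV, Prod.ext_iff, Fin.ext_iff, Nat.mod_eq_of_lt hp1, Nat.mod_eq_of_lt hp2,
    Nat.mod_eq_of_lt hq1, Nat.mod_eq_of_lt hq2] at h
  exact Prod.ext h.1 h.2

lemma toV_surj {a b : ℕ} (ha : 0 < a) (hb : 0 < b) (v : Fin a × Fin b) :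
    toV a b ha hb (v.1.val, v.2.val) = v := by
  simp [toV, Nat.mod_eq_of_lt v.1.isLt, Nat.mod_eq_of_lt v.2.isLt]

/-- ascending list [1, 2, ..., n] -/
def ascL : ℕ → List ℕ
  | 0 => []
  | n + 1 => ascL n ++ [n + 1]

@[simp] lemma ascL_length : ∀ n, (ascL n).length = n
  | 0 => rfl
  | n + 1 => by simp [ascL, ascL_length n]

@[simp] lemma mem_ascL {j n : ℕ} : j ∈ ascL n ↔ 1 ≤ j ∧ j ≤ n := by
  induction n with
  | zero => simp [ascL]; omega
  | succ n ih =>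
    simp only [ascL, List.mem_append, List.mem_singleton, ih]
    omega

lemma ascL_ne_nil {n : ℕ} (h : n ≠ 0) : ascL n ≠ [] := by
  intro he; have := ascL_length n; rw [he] at this; simp at this; omega

@[simp] lemma ascL_head? : ∀ {n}, (ascL n).head? = if n = 0 then none else some 1
  | 0 => rfl
  | n + 1 => by
    cases n with
    | zero => rfl
    | succ m => rw [ascL, List.head?_append_of_ne_nil _ (ascL_ne_nil (by omega))]
                simp [@ascL_head? (m+1)]

@[simp] lemma ascL_getLast? : ∀ {n}, (ascL n).getLast? = if n = 0 then none else some n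
  | 0 => rfl
  | n + 1 => by rw [ascL]; simp [List.getLast?_concat]

lemma ascL_chain' : ∀ n, (ascL n).Chain' (fun x y => x + 1 = y)
  | 0 => List.isChain_nil
  | n + 1 => by
    refine (ascL_chain' n).append (List.isChain_singleton _) ?_
    intro x hx y hy
    simp at hy; subst hy
    rcases n with _ | m
    · simp [ascL] at hx
    · rw [ascL_getLast?] at hx; simp at hx; omega

/-- row `i`, columns `1..b-1`, direction depending on parity of `i` -/
def rowL (b i : ℕ) : List (ℕ × ℕ) :=
  (if i % 2 = 0 then ascL (b-1) else (ascL (b-1)).reverse).map fun j => (i, j)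

lemma rowL_length {b i : ℕ} : (rowL b i).length = b - 1 := by
  unfold rowL
  split <;> simp

lemma rowL_ne_nil {b i : ℕ} (hb : 2 ≤ b) : rowL b i ≠ [] := by
  intro h
  have := @rowL_length b i
  rw [h] at this
  simp at this
  omega

lemma mem_rowL {b i : ℕ} {p : ℕ × ℕ} :
    p ∈ rowL b i ↔ p.1 = i ∧ 1 ≤ p.2 ∧ p.2 ≤ b - 1 := by
  unfold rowL
  split <;> simp [Prod.ext_iff, eq_comm] <;> aesop

lemma rowL_chain' {b i : ℕ} : (rowL b i).Chain' R := by
  unfold rowL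
  unfold List.Chain'
  rw [List.isChain_map]
  split
  · exact (ascL_chain' (b-1)).imp fun x y h => Or.inl ⟨rfl, Or.inl h⟩
  · rw [List.isChain_reverse]
    exact (ascL_chain' (b-1)).imp fun x y h => Or.inl ⟨rfl, Or.inr h⟩

lemma rowL_head? {b i : ℕ} (hb : 2 ≤ b) :
    (rowL b i).head? = some (i, if i % 2 = 0 then 1 else b - 1) := by
  unfold rowL
  rw [List.head?_map]
  split
  · rw [ascL_head?]; simp; omega
  · rw [List.head?_reverse, ascL_getLast?]; simp; omega

lemma rowL_getLast? {b i : ℕ} (hb : 2 ≤ b) :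
    (rowL b i).getLast? = some (i, if i % 2 = 0 then b - 1 else 1) := by
  unfold rowL
  rw [List.getLast?_map]
  split
  · rw [ascL_getLast?]; simp; omega
  · rw [List.getLast?_reverse, ascL_head?]; simp; omega

/-- snake over rows `0..i-1`, columns `1..b-1` -/
def snakeL (b : ℕ) : ℕ → List (ℕ × ℕ)
  | 0 => []
  | i + 1 => snakeL b i ++ rowL b i

lemma snakeL_length {b : ℕ} : ∀ i, (snakeL b i).length = i * (b - 1)
  | 0 => by simp [snakeL]
  | i + 1 => by
    simp [snakeL, snakeL_length i, rowL_length, Nat.succ_mul]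

lemma mem_snakeL {b : ℕ} {p : ℕ × ℕ} : ∀ {i}, p ∈ snakeL b i ↔ p.1 < i ∧ 1 ≤ p.2 ∧ p.2 ≤ b - 1 := by
  intro i
  induction i with
  | zero => simp [snakeL]
  | succ i ih =>
    simp only [snakeL, List.mem_append, ih, mem_rowL]
    omega

lemma snakeL_ne_nil {b i : ℕ} (hb : 2 ≤ b) (hi : 1 ≤ i) : snakeL b i ≠ [] := by
  cases i with
  | zero => omega
  | succ i => exact fun h => rowL_ne_nil hb (List.append_eq_nil_iff.1 h).2

lemma snakeL_head? {b : ℕ} (hb : 2 ≤ b) : ∀ {i}, 1 ≤ i → (snakeL b i).head? = some (0, 1) := by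
  intro i
  induction i with
  | zero => omega
  | succ i ih =>
    intro _
    cases Nat.eq_zero_or_pos i with
    | inl h => subst h; simpa [snakeL] using rowL_head? (i := 0) hb
    | inr h =>
      rw [snakeL, List.head?_append_of_ne_nil _ (snakeL_ne_nil hb h)]
      exact ih h

lemma snakeL_getLast? {b : ℕ} (hb : 2 ≤ b) {i : ℕ} (hi : 1 ≤ i) :
    (snakeL b i).getLast? = some (i - 1, if (i-1) % 2 = 0 then b - 1 else 1) := by
  cases i with
  | zero => omega
  | succ i =>
    rw [snakeL, List.getLast?_append_of_ne_nil _ (rowL_ne_nil hb), rowL_getLast? hb]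
    simp

lemma snakeL_chain' {b : ℕ} (hb : 2 ≤ b) : ∀ i, (snakeL b i).Chain' R
  | 0 => List.isChain_nil
  | i + 1 => by
    refine (snakeL_chain' hb i).append rowL_chain' ?_
    intro x hx y hy
    cases Nat.eq_zero_or_pos i with
    | inl h => subst h; simp [snakeL] at hx
    | inr h =>
      rw [snakeL_getLast? hb h] at hx
      rw [rowL_head? hb] at hy
      simp at hx hy
      subst hx hy
      -- last of snake i is (i-1, c), head of row i is (i, c') with same column
      rcases Nat.even_or_odd (i-1) with he | ho
      · have h1 : (i-1) % 2 = 0 := Nat.even_iff.1 he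
        have h2 : ¬ (i % 2 = 0) := by omega
        simp [h1, h2, R]
        omega
      · have h1 : ¬((i-1) % 2 = 0) := by
          have := Nat.odd_iff.1 ho; omega
        have h2 : i % 2 = 0 := by have := Nat.odd_iff.1 ho; omega
        simp [h1, h2, R]
        omega

/-- descending column 0 : (i-1,0), ..., (0,0) -/
def colZ : ℕ → List (ℕ × ℕ)
  | 0 => []
  | i + 1 => (i, 0) :: colZ i

lemma colZ_length : ∀ i, (colZ i).length = i
  | 0 => rfl
  | i + 1 => by simp [colZ, colZ_length i]

lemma mem_colZ {p : ℕ × ℕ} : ∀ {i}, p ∈ colZ i ↔ p.1 < i ∧ p.2 = 0 := by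
  intro i
  induction i with
  | zero => simp [colZ]
  | succ i ih =>
    simp only [colZ, List.mem_cons, ih, Prod.ext_iff]
    constructor
    · rintro (⟨h1, h2⟩ | ⟨h1, h2⟩) <;> omega
    · intro ⟨h1, h2⟩
      rcases Nat.lt_succ_iff_lt_or_eq.1 h1 with h | h
      · right; omega
      · left; exact ⟨h, h2⟩

lemma colZ_head? {i : ℕ} (hi : 1 ≤ i) : (colZ i).head? = some (i - 1, 0) := by
  cases i with
  | zero => omega
  | succ i => simp [colZ]

lemma colZ_ne_nil {i : ℕ} (hi : 1 ≤ i) : colZ i ≠ [] := by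
  cases i with
  | zero => omega
  | succ i => simp [colZ]

lemma colZ_getLast? : ∀ {i}, 1 ≤ i → (colZ i).getLast? = some (0, 0) := by
  intro i
  induction i with
  | zero => omega
  | succ i ih =>
    intro _
    cases Nat.eq_zero_or_pos i with
    | inl h => subst h; rfl
    | inr h =>
      rw [colZ, show ((i, 0) :: colZ i) = [(i, 0)] ++ colZ i from rfl,
        List.getLast?_append_of_ne_nil _ (colZ_ne_nil h)]
      exact ih h
  
lemma colZ_chain' : ∀ i, (colZ i).Chain' R
  | 0 => List.isChain_nil
  | 1 => List.isChain_singleton _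
  | i + 2 => by
    unfold List.Chain'
    rw [colZ, List.isChain_cons]
    refine ⟨?_, colZ_chain' (i+1)⟩
    intro y hy
    rw [colZ_head? (by omega)] at hy
    simp at hy
    subst hy
    right
    exact ⟨rfl, Or.inr (by omega)⟩

lemma chain'_imp_mem {α : Type*} {R S : α → α → Prop} :
    ∀ {l : List α}, l.Chain' R → (∀ x ∈ l, ∀ y ∈ l, R x y → S x y) → l.Chain' S
  | [] , _, _ => List.isChain_nil
  | [x], _, _ => List.isChain_singleton x
  | x :: y :: r, h, hs => by
    unfold List.Chain' at h ⊢
    rw [List.isChain_cons_cons] at h ⊢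
    exact ⟨hs x (by simp) y (by simp) h.1,
      chain'_imp_mem h.2 fun p hp q hq hr => hs p (by simp [hp]) q (by simp [hq]) hr⟩

/-! ### The even case -/

def evenL (a b : ℕ) : List (ℕ × ℕ) := snakeL b a ++ colZ a

lemma mem_evenL {a b : ℕ} {p : ℕ × ℕ} (hb : 2 ≤ b) :
    p ∈ evenL a b ↔ p.1 < a ∧ p.2 < b := by
  unfold evenL
  rw [List.mem_append, mem_snakeL, mem_colZ]
  omega

lemma evenL_length {a b : ℕ} (hb : 1 ≤ b) : (evenL a b).length = a * b := by
  unfold evenL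
  rw [List.length_append, snakeL_length, colZ_length]
  cases b with
  | zero => omega
  | succ b' => simp [Nat.mul_succ]

lemma evenL_chain' {a b : ℕ} (ha : 2 ≤ a) (hb : 2 ≤ b) (hae : a % 2 = 0) :
    (evenL a b).Chain' R := by
  refine (snakeL_chain' hb a).append (colZ_chain' a) ?_
  intro x hx y hy
  rw [snakeL_getLast? hb (by omega)] at hx
  rw [colZ_head? (by omega)] at hy
  have h1 : ¬((a - 1) % 2 = 0) := by omega
  simp [h1] at hx hy
  subst hx hy
  exact Or.inl ⟨rfl, Or.inr rfl⟩

lemma evenL_head? {a b : ℕ} (ha : 2 ≤ a) (hb : 2 ≤ b) : (evenL a b).head? = some (0, 1) := by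
  unfold evenL
  rw [List.head?_append_of_ne_nil _ (snakeL_ne_nil hb (by omega))]
  exact snakeL_head? hb (by omega)

lemma evenL_getLast? {a b : ℕ} (ha : 2 ≤ a) (hb : 2 ≤ b) :
    (evenL a b).getLast? = some (0, 0) := by
  unfold evenL
  rw [List.getLast?_append_of_ne_nil _ (colZ_ne_nil (by omega))]
  exact colZ_getLast? (by omega)

lemma getLast_eq_of_getLast? {α : Type*} {l : List α} {x : α} (h : l.getLast? = some x)
    (hne : l ≠ []) : l.getLast hne = x := by
  rw [List.getLast?_eq_getLast hne] at h
  exact (Option.some.injEq _ _ ▸ h :)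

lemma head_eq_of_head? {α : Type*} {l : List α} {x : α} (h : l.head? = some x)
    (hne : l ≠ []) : l.head hne = x := by
  rw [List.head?_eq_head hne] at h
  exact (Option.some.injEq _ _ ▸ h :)

lemma even_ham (a b : ℕ) (ha : 2 ≤ a) (hb : 2 ≤ b) (hae : a % 2 = 0) :
    ∃ (v : Fin a × Fin b) (p : (gridGraph a b).Walk v v), p.IsHamiltonianCycle := by
  have ha0 : 0 < a := by omega
  have hb0 : 0 < b := by omega
  set L : List (Fin a × Fin b) := (evenL a b).map (toV a b ha0 hb0) with hL
  have hlen : L.length = a * b := by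
    rw [hL, List.length_map, evenL_length (by omega)]
  have h3 : 3 ≤ L.length := by
    rw [hlen]
    have : 2 * 2 ≤ a * b := Nat.mul_le_mul ha hb
    omega
  have hne : L ≠ [] := by
    intro h; rw [h] at h3; simp at h3
  apply exists_hamCycle_of_list L h3
  case hc =>
    unfold List.Chain'
    rw [hL, List.isChain_map]
    refine chain'_imp_mem (evenL_chain' ha hb hae) ?_
    intro x hx y hy hr
    rw [mem_evenL hb] at hx hy
    exact adj_toV ha0 hb0 hx.1 hx.2 hy.1 hy.2 hr
  case hcl =>
    have hgl : L.getLast hne = toV a b ha0 hb0 (0, 0) := by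
      apply getLast_eq_of_getLast?
      rw [hL, List.getLast?_map, evenL_getLast? ha hb]
      rfl
    have hhd : L.head hne = toV a b ha0 hb0 (0, 1) := by
      apply head_eq_of_head?
      rw [hL, List.head?_map, evenL_head? ha hb]
      rfl
    rw [hgl, hhd]
    exact adj_toV ha0 hb0 (by omega) (by omega) (by omega) (by omega)
      (Or.inl ⟨rfl, Or.inl rfl⟩)
  case hlen => rw [hlen]; simp
  case hall =>
    intro v
    rw [hL, List.mem_map]
    exact ⟨(v.1.val, v.2.val), (mem_evenL hb).2 ⟨v.1.isLt, v.2.isLt⟩, toV_surj ha0 hb0 v⟩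

/-! ### The odd case -/

/-- comb teeth covering the bottom two rows, from right to left -/
def combL (a b : ℕ) : ℕ → List (ℕ × ℕ)
  | 0 => []
  | m + 1 => combL a b m ++
      [(a-2, b-2-2*m), (a-1, b-2-2*m), (a-1, b-3-2*m), (a-2, b-3-2*m)]

lemma combL_length {a b : ℕ} : ∀ m, (combL a b m).length = 4 * m
  | 0 => rfl
  | m + 1 => by simp [combL, combL_length m]; omega

lemma combL_ne_nil {a b m : ℕ} (hm : 1 ≤ m) : combL a b m ≠ [] := by
  intro h
  have := combL_length (a := a) (b := b) m
  rw [h] at this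
  simp at this
  omega

lemma combL_head? {a b : ℕ} : ∀ {m}, 1 ≤ m → (combL a b m).head? = some (a-2, b-2)
  | 0, h => by omega
  | m + 1, _ => by
    cases Nat.eq_zero_or_pos m with
    | inl h => subst h; rfl
    | inr h =>
      rw [combL, List.head?_append_of_ne_nil _ (combL_ne_nil h)]
      exact combL_head? h

lemma combL_getLast? {a b m : ℕ} (hm : 1 ≤ m) :
    (combL a b m).getLast? = some (a-2, b-1-2*m) := by
  cases m with
  | zero => omega
  | succ m =>
    rw [combL, List.getLast?_append_of_ne_nil _ (by simp)]
    have : [(a-2, b-2-2*m), (a-1, b-2-2*m), (a-1, b-3-2*m), (a-2, b-3-2*m)].getLast?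
        = some (a-2, b-3-2*m) := rfl
    rw [this]
    congr 2
    omega

lemma mem_combL {a b : ℕ} {p : ℕ × ℕ} (hb : 3 ≤ b) :
    ∀ {m}, 2 * m ≤ b - 1 →
      (p ∈ combL a b m ↔ (p.1 = a-2 ∨ p.1 = a-1) ∧ b-1-2*m ≤ p.2 ∧ p.2 ≤ b-2) := by
  intro m
  induction m with
  | zero => simp [combL]; omega
  | succ m ih =>
    intro hm
    rw [combL, List.mem_append, ih (by omega)]
    simp only [List.mem_cons, List.mem_singleton, List.not_mem_nil, or_false, Prod.ext_iff]
    constructor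
    · rintro (⟨h1, h2, h3⟩ | ⟨h1, h2⟩ | ⟨h1, h2⟩ | ⟨h1, h2⟩ | ⟨h1, h2⟩) <;> omega
    · rintro ⟨h1 | h1, h2, h3⟩
      · -- row a-2
        by_cases hc : b-1-2*m ≤ p.2
        · left; exact ⟨Or.inl h1, hc, h3⟩
        · right
          have : p.2 = b-2-2*m ∨ p.2 = b-3-2*m := by omega
          rcases this with h | h
          · left; exact ⟨h1, h⟩
          · right; right; right; exact ⟨h1, h⟩
      · by_cases hc : b-1-2*m ≤ p.2
        · left; exact ⟨Or.inr h1, hc, h3⟩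
        · right
          have : p.2 = b-2-2*m ∨ p.2 = b-3-2*m := by omega
          rcases this with h | h
          · right; left; exact ⟨h1, h⟩
          · right; right; left; exact ⟨h1, h⟩

lemma combL_chain' {a b : ℕ} (ha : 3 ≤ a) (hb : 3 ≤ b) :
    ∀ {m}, 2 * m ≤ b - 1 → (combL a b m).Chain' R := by
  intro m
  induction m with
  | zero => exact fun _ => List.isChain_nil
  | succ m ih =>
    intro hm
    refine (ih (by omega)).append ?_ ?_
    · -- chain inside the new tooth
      refine List.isChain_cons_cons.2 ⟨?_, List.isChain_cons_cons.2 ⟨?_, List.isChain_cons_cons.2 ⟨?_, List.isChain_singleton _⟩⟩⟩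
      · exact Or.inr ⟨rfl, Or.inl (by omega)⟩
      · exact Or.inl ⟨rfl, Or.inr (by omega)⟩
      · exact Or.inr ⟨rfl, Or.inr (by omega)⟩
    · intro x hx y hy
      cases Nat.eq_zero_or_pos m with
      | inl h => subst h; simp [combL] at hx
      | inr h =>
        rw [combL_getLast? h] at hx
        simp at hx hy
        subst hx hy
        exact Or.inl ⟨rfl, Or.inr (by omega)⟩

/-- the full list for the odd × odd grid minus corner (a-1, b-1) -/
def oddL (a b : ℕ) : List (ℕ × ℕ) :=
  snakeL b (a-2) ++ ((a-2, b-1) :: combL a b ((b-1)/2)) ++ colZ (a-2)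

lemma oddL_length {a b : ℕ} (ha : 3 ≤ a) (hb : 3 ≤ b) (hbo : b % 2 = 1) :
    (oddL a b).length = a * b - 1 := by
  obtain ⟨a2, rfl⟩ : ∃ a2, a = a2 + 2 := ⟨a - 2, by omega⟩
  obtain ⟨c, rfl⟩ : ∃ c, b = 2 * c + 1 := ⟨b / 2, by omega⟩
  unfold oddL
  rw [List.length_append, List.length_append, snakeL_length, colZ_length,
    List.length_cons, combL_length]
  have h1 : (a2 + 2) - 2 = a2 := by omega
  have h2 : (2 * c + 1) - 1 = 2 * c := by omega
  rw [h1, h2]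
  have h3 : 2 * c / 2 = c := by omega
  rw [h3]
  have : (a2 + 2) * (2 * c + 1) = a2 * (2 * c) + (4 * c + 1) + a2 + 1 := by ring
  omega

lemma mem_oddL {a b : ℕ} {p : ℕ × ℕ} (ha : 3 ≤ a) (hb : 3 ≤ b) (hbo : b % 2 = 1) :
    p ∈ oddL a b ↔ (p.1 < a ∧ p.2 < b) ∧ ¬(p.1 = a-1 ∧ p.2 = b-1) := by
  have hM : 2 * ((b-1)/2) ≤ b - 1 := by omega
  have hM' : b - 1 - 2 * ((b-1)/2) = 0 := by omega
  unfold oddL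
  rw [List.mem_append, List.mem_append, List.mem_cons, mem_snakeL, mem_colZ,
    mem_combL hb hM, hM', Prod.ext_iff]
  constructor
  · rintro ((h | (h | h)) | h) <;> omega
  · rintro ⟨⟨h1, h2⟩, h3⟩
    by_cases hc1 : p.1 < a - 2
    · by_cases hc2 : p.2 = 0
      · right; omega
      · left; left; omega
    · -- p.1 = a-2 or a-1
      by_cases hc2 : p.2 = b - 1
      · -- must be (a-2, b-1)
        left; right; left
        omega
      · left; right; right
        omega

lemma oddL_chain' {a b : ℕ} (ha : 3 ≤ a) (hb : 3 ≤ b) (hao : a % 2 = 1) (hbo : b % 2 = 1) :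
    (oddL a b).Chain' R := by
  have hb2 : 2 ≤ b := by omega
  have hM1 : 1 ≤ (b-1)/2 := by omega
  unfold oddL
  refine List.IsChain.append ?_ (colZ_chain' (a-2)) ?_
  · refine List.IsChain.append (snakeL_chain' hb2 (a-2)) ?_ ?_
    · -- chain of (a-2, b-1) :: combL
      rw [List.isChain_cons]
      refine ⟨?_, combL_chain' ha hb (by omega)⟩
      intro y hy
      rw [combL_head? hM1] at hy
      simp at hy
      subst hy
      exact Or.inl ⟨rfl, Or.inr (by omega)⟩
    · -- link snake → (a-2, b-1)
      intro x hx y hy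
      rw [snakeL_getLast? hb2 (by omega)] at hx
      simp at hy
      have h1 : (a - 2 - 1) % 2 = 0 := by omega
      simp [h1] at hx
      subst hx hy
      exact Or.inr ⟨rfl, Or.inl (by omega)⟩
  · -- link middle → colZ
    intro x hx y hy
    rw [List.getLast?_append_of_ne_nil _ (List.cons_ne_nil _ _)] at hx
    rw [show ((a-2, b-1) :: combL a b ((b-1)/2)) = [(a-2, b-1)] ++ combL a b ((b-1)/2) from rfl,
      List.getLast?_append_of_ne_nil _ (combL_ne_nil hM1), combL_getLast? hM1] at hx
    rw [colZ_head? (by omega)] at hy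
    simp at hx hy
    subst hx hy
    have : b - 1 - 2 * ((b-1)/2) = 0 := by omega
    rw [this]
    exact Or.inr ⟨rfl, Or.inr (by omega)⟩

lemma oddL_head? {a b : ℕ} (ha : 3 ≤ a) (hb : 3 ≤ b) : (oddL a b).head? = some (0, 1) := by
  have h1 : snakeL b (a-2) ≠ [] := snakeL_ne_nil (by omega) (by omega)
  unfold oddL
  rw [List.head?_append_of_ne_nil _ (by intro h; exact h1 (List.append_eq_nil_iff.1 h).1),
    List.head?_append_of_ne_nil _ h1]
  exact snakeL_head? (by omega) (by omega)

lemma oddL_getLast? {a b : ℕ} (ha : 3 ≤ a) (hb : 3 ≤ b) : (oddL a b).getLast? = some (0, 0) := by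
  unfold oddL
  rw [List.getLast?_append_of_ne_nil _ (colZ_ne_nil (by omega))]
  exact colZ_getLast? (by omega)

lemma odd_ham (a b : ℕ) (ha : 2 ≤ a) (hb : 2 ≤ b) (hao : a % 2 = 1) (hbo : b % 2 = 1) :
    ∃ c : Fin a × Fin b, (c.1.val = a - 1 ∧ c.2.val = b - 1) ∧
      ∃ (v : {x : Fin a × Fin b // x ∈ ({c}ᶜ : Set (Fin a × Fin b))})
        (p : ((gridGraph a b).induce ({c}ᶜ : Set (Fin a × Fin b))).Walk v v),
        p.IsHamiltonianCycle := by
  have ha3 : 3 ≤ a := by omega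
  have hb3 : 3 ≤ b := by omega
  have ha0 : 0 < a := by omega
  have hb0 : 0 < b := by omega
  set c : Fin a × Fin b := (⟨a-1, by omega⟩, ⟨b-1, by omega⟩) with hc
  refine ⟨c, ⟨rfl, rfl⟩, ?_⟩
  set l := oddL a b with hl
  have hbound : ∀ p ∈ l, (p.1 < a ∧ p.2 < b) ∧ toV a b ha0 hb0 p ∈ ({c}ᶜ : Set (Fin a × Fin b)) := by
    intro p hp
    rw [hl, mem_oddL ha3 hb3 hbo] at hp
    refine ⟨hp.1, ?_⟩
    simp only [Set.mem_compl_iff, Set.mem_singleton_iff]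
    intro he
    simp only [toV, hc, Prod.ext_iff, Fin.ext_iff] at he
    rw [Nat.mod_eq_of_lt hp.1.1, Nat.mod_eq_of_lt hp.1.2] at he
    exact hp.2 he
  set Ls : List {x : Fin a × Fin b // x ∈ ({c}ᶜ : Set (Fin a × Fin b))} :=
    l.attach.map (fun q => ⟨toV a b ha0 hb0 q.1, (hbound q.1 q.2).2⟩) with hLs
  have hval : Ls.map Subtype.val = l.map (toV a b ha0 hb0) := by
    simp [hLs, List.map_map]
  have hlenl : Ls.length = a * b - 1 := by
    rw [hLs, List.length_map, List.length_attach, hl, oddL_length ha3 hb3 hbo]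
  have hcard : Fintype.card {x : Fin a × Fin b // x ∈ ({c}ᶜ : Set (Fin a × Fin b))}
      = a * b - 1 := by
    simp [Fintype.card_subtype_compl]
  have h3 : 3 ≤ Ls.length := by
    rw [hlenl]
    have : 3 * 3 ≤ a * b := Nat.mul_le_mul ha3 hb3
    omega
  have hne : Ls ≠ [] := by intro h; rw [h] at h3; simp at h3
  have hchain_map : (l.map (toV a b ha0 hb0)).Chain' (gridGraph a b).Adj := by
    unfold List.Chain'
    rw [List.isChain_map]
    refine chain'_imp_mem (oddL_chain' ha3 hb3 hao hbo) ?_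
    intro x hx y hy hr
    exact adj_toV ha0 hb0 (hbound x hx).1.1 (hbound x hx).1.2 (hbound y hy).1.1
      (hbound y hy).1.2 hr
  apply exists_hamCycle_of_list Ls h3
  case hc =>
    have h2 : (Ls.map Subtype.val).Chain' (gridGraph a b).Adj := by
      rw [hval]; exact hchain_map
    have h3 := (List.isChain_map (Subtype.val :
      {x : Fin a × Fin b // x ∈ ({c}ᶜ : Set (Fin a × Fin b))} → Fin a × Fin b)).1 h2
    exact h3
  case hcl =>
    have hgl : (Ls.getLast hne).val = toV a b ha0 hb0 (0, 0) := by
      have h1 : (Ls.map Subtype.val).getLast? = some ((Ls.getLast hne).val) := by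
        rw [List.getLast?_map, List.getLast?_eq_getLast hne]; rfl
      rw [hval, List.getLast?_map, hl, oddL_getLast? ha3 hb3] at h1
      exact (Option.some.inj h1).symm
    have hhd : (Ls.head hne).val = toV a b ha0 hb0 (0, 1) := by
      have h1 : (Ls.map Subtype.val).head? = some ((Ls.head hne).val) := by
        rw [List.head?_map, List.head?_eq_head hne]; rfl
      rw [hval, List.head?_map, hl, oddL_head? ha3 hb3] at h1
      exact (Option.some.inj h1).symm
    show (gridGraph a b).Adj (Ls.getLast hne).val (Ls.head hne).val
    rw [hgl, hhd]
    exact adj_toV ha0 hb0 (by omega) (by omega) (by omega) (by omega)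
      (Or.inl ⟨rfl, Or.inl rfl⟩)
  case hlen => rw [hlenl, hcard]
  case hall =>
    intro v
    have hvb : v.val ≠ c := v.2
    have hp : ((v.val.1.val, v.val.2.val) : ℕ × ℕ) ∈ l := by
      rw [hl, mem_oddL ha3 hb3 hbo]
      refine ⟨⟨v.val.1.isLt, v.val.2.isLt⟩, ?_⟩
      rintro ⟨h1, h2⟩
      exact hvb (Prod.ext (Fin.ext h1) (Fin.ext h2))
    have : (⟨toV a b ha0 hb0 (v.val.1.val, v.val.2.val),
        (hbound _ hp).2⟩ : {x : Fin a × Fin b // x ∈ ({c}ᶜ : Set (Fin a × Fin b))}) ∈ Ls := by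
      rw [hLs, List.mem_map]
      exact ⟨⟨_, hp⟩, List.mem_attach l _, rfl⟩
    have hv : (⟨toV a b ha0 hb0 (v.val.1.val, v.val.2.val), (hbound _ hp).2⟩ :
        {x : Fin a × Fin b // x ∈ ({c}ᶜ : Set (Fin a × Fin b))}) = v :=
      Subtype.ext (toV_surj ha0 hb0 v.val)
    rw [← hv]
    exact this


def swapHom (a b : ℕ) : gridGraph b a →g gridGraph a b where
  toFun := Prod.swap
  map_rel' := by
    intro p q h
    simp only [gridGraph, fromRel_adj] at h ⊢
    refine ⟨fun he => h.1 (Prod.swap_injective he), ?_⟩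
    have := h.2
    tauto

lemma swapHom_bijective (a b : ℕ) : Function.Bijective (swapHom a b) :=
  ⟨fun x y h => Prod.swap_injective h, fun x => ⟨Prod.swap x, Prod.swap_swap x⟩⟩

end GridAux

open GridAux in
theorem grid_long_cycle (a b : ℕ) (ha : 2 ≤ a) (hb : 2 ≤ b) :
    (∃ (v : Fin a × Fin b) (p : (gridGraph a b).Walk v v),
      p.IsCycle ∧ a * b - 1 ≤ p.length) ∧
    ((∃ (v : Fin a × Fin b) (p : (gridGraph a b).Walk v v),
        p.IsHamiltonianCycle) ∨
      ∃ c : Fin a × Fin b, GridCorner a b c ∧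
        ∃ (v : {x : Fin a × Fin b // x ∈ ({c}ᶜ : Set (Fin a × Fin b))})
          (p : ((gridGraph a b).induce ({c}ᶜ : Set (Fin a × Fin b))).Walk v v),
          p.IsHamiltonianCycle) := by
  have key : (∃ (v : Fin a × Fin b) (p : (gridGraph a b).Walk v v),
        p.IsHamiltonianCycle) ∨
      ∃ c : Fin a × Fin b, GridCorner a b c ∧
        ∃ (v : {x : Fin a × Fin b // x ∈ ({c}ᶜ : Set (Fin a × Fin b))})
          (p : ((gridGraph a b).induce ({c}ᶜ : Set (Fin a × Fin b))).Walk v v),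
          p.IsHamiltonianCycle := by
    by_cases hae : a % 2 = 0
    · exact Or.inl (even_ham a b ha hb hae)
    · by_cases hbe : b % 2 = 0
      · obtain ⟨v, p, hp⟩ := even_ham b a hb ha hbe
        exact Or.inl ⟨swapHom a b v, p.map (swapHom a b),
          hp.map (swapHom_bijective a b)⟩
      · obtain ⟨c, hcv, hex⟩ := odd_ham a b ha hb (by omega) (by omega)
        exact Or.inr ⟨c, ⟨Or.inr hcv.1, Or.inr hcv.2⟩, hex⟩
  refine ⟨?_, key⟩
  rcases key with ⟨v, p, hp⟩ | ⟨c, -, v, p, hp⟩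
  · refine ⟨v, p, hp.isCycle, ?_⟩
    rw [hp.length_eq]
    simp
  · have hcard : Fintype.card {x : Fin a × Fin b // x ∈ ({c}ᶜ : Set (Fin a × Fin b))}
        = a * b - 1 := by
      simp [Fintype.card_subtype_compl]
    let ι : (gridGraph a b).induce ({c}ᶜ : Set (Fin a × Fin b)) →g gridGraph a b :=
      ⟨Subtype.val, fun h => h⟩
    refine ⟨v.val, p.map ι, hp.isCycle.map Subtype.val_injective, ?_⟩
    rw [Walk.length_map, hp.length_eq, hcard]
end Aux
end

section
/- Every twisted ℓ-prism contains the wheel graph on ℓ + 1 vertices as a minor. -/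
open SimpleGraph

def IsMinor {W V : Type*} (H : SimpleGraph W) (G : SimpleGraph V) : Prop :=
  ∃ f : W → Set V,
    (∀ w, (f w).Nonempty ∧ (G.induce (f w)).Connected) ∧
    (∀ w w', w ≠ w' → Disjoint (f w) (f w')) ∧
    (∀ w w', H.Adj w w' → ∃ u ∈ f w, ∃ v ∈ f w', G.Adj u v)

/-- The twisted `ℓ`-prism determined by a permutation `π`: two disjoint cycles
of length `ℓ` joined by the perfect matching `(0, i) — (1, π i)`. -/
def twistedPrism (ℓ : ℕ) (π : Equiv.Perm (Fin ℓ)) : SimpleGraph (Fin 2 × Fin ℓ) :=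
  SimpleGraph.fromRel fun p q =>
    (p.1 = q.1 ∧ (cycleGraph ℓ).Adj p.2 q.2) ∨
    (p.1 = 0 ∧ q.1 = 1 ∧ q.2 = π p.2)

/-- The wheel graph with a cycle of length `k` plus a hub (so `k + 1` vertices):
the hub `none` is adjacent to every cycle vertex. -/
def wheelGraph (k : ℕ) : SimpleGraph (Option (Fin k)) :=
  SimpleGraph.fromRel fun p q =>
    (p = none ∧ q ≠ none) ∨
    (∃ i j, p = some i ∧ q = some j ∧ (cycleGraph k).Adj i j)

theorem twistedPrism_contains_wheel (ℓ : ℕ) (hℓ : 3 ≤ ℓ)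
    (π : Equiv.Perm (Fin ℓ)) :
    IsMinor (wheelGraph ℓ) (twistedPrism ℓ π) := by
  have hℓ0 : ℓ ≠ 0 := by omega
  have hcyc : (cycleGraph ℓ).Connected := by
    obtain ⟨m, rfl⟩ := Nat.exists_eq_succ_of_ne_zero hℓ0
    exact cycleGraph_connected
  refine ⟨fun w => match w with
    | none => {p | p.1 = 1}
    | some i => {((0 : Fin 2), i)}, ?_, ?_, ?_⟩
  · rintro (_ | i)
    · constructor
      · exact ⟨(1, ⟨0, by omega⟩), rfl⟩
      · -- the induced graph on the second cycle is connected
        refine Connected.map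
          (⟨fun j => ⟨(1, j), rfl⟩, ?_⟩ : cycleGraph ℓ →g (twistedPrism ℓ π).induce {p | p.1 = 1})
          ?_ hcyc
        · intro a b hab
          show (twistedPrism ℓ π).Adj (1, a) (1, b)
          rw [twistedPrism, fromRel_adj]
          exact ⟨by simp [Prod.ext_iff, hab.ne], Or.inl (Or.inl ⟨rfl, hab⟩)⟩
        · rintro ⟨⟨c, j⟩, hc⟩
          simp only [Set.mem_setOf_eq] at hc
          subst hc
          exact ⟨j, Subtype.ext rfl⟩
    · constructor
      · exact ⟨((0 : Fin 2), i), rfl⟩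
      · haveI : Nonempty ↥({((0 : Fin 2), i)} : Set (Fin 2 × Fin ℓ)) := ⟨⟨_, rfl⟩⟩
        constructor
        intro a b
        have hab : a = b := Subtype.ext (a.2.trans b.2.symm)
        rw [hab]
  · rintro (_ | i) (_ | j) hne
    · exact absurd rfl hne
    · refine Set.disjoint_left.mpr ?_
      rintro p hp rfl
      simp at hp
    · refine Set.disjoint_left.mpr ?_
      rintro p rfl hp
      simp at hp
    · refine Set.disjoint_left.mpr ?_
      rintro p rfl hp
      simp only [Set.mem_singleton_iff, Prod.mk.injEq] at hp
      exact hne (by rw [hp.2])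
  · intro w w' hadj
    rw [wheelGraph, fromRel_adj] at hadj
    obtain ⟨hne, h | h⟩ := hadj
    · rcases h with ⟨h1, h2⟩ | ⟨a, b, h1, h2, hab⟩
      · subst h1
        obtain ⟨i, rfl⟩ := Option.ne_none_iff_exists'.mp h2
        refine ⟨(1, π i), rfl, ((0 : Fin 2), i), rfl, ?_⟩
        rw [twistedPrism, fromRel_adj]
        exact ⟨by simp [Prod.ext_iff], Or.inr (Or.inr ⟨rfl, rfl, rfl⟩)⟩
      · subst h1; subst h2
        refine ⟨((0 : Fin 2), a), rfl, ((0 : Fin 2), b), rfl, ?_⟩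
        rw [twistedPrism, fromRel_adj]
        exact ⟨by simp [Prod.ext_iff, hab.ne], Or.inl (Or.inl ⟨rfl, hab⟩)⟩
    · rcases h with ⟨h1, h2⟩ | ⟨a, b, h1, h2, hab⟩
      · subst h1
        obtain ⟨i, rfl⟩ := Option.ne_none_iff_exists'.mp h2
        refine ⟨((0 : Fin 2), i), rfl, (1, π i), rfl, ?_⟩
        rw [twistedPrism, fromRel_adj]
        exact ⟨by simp [Prod.ext_iff], Or.inl (Or.inr ⟨rfl, rfl, rfl⟩)⟩
      · subst h1; subst h2
        refine ⟨((0 : Fin 2), b), rfl, ((0 : Fin 2), a), rfl, ?_⟩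
        rw [twistedPrism, fromRel_adj]
        exact ⟨by simp [Prod.ext_iff, hab.ne'], Or.inl (Or.inl ⟨rfl, hab.symm⟩)⟩
end

section
/- Let G be a connected graph with maximum degree at most 3 and with |E(G)| − |V(G)| = m − 1 for some positive integer m. Then every set of vertices that intersects all cycles of G has size at least m/2. -/
open SimpleGraph

section Aux

variable {W : Type*}

/-- The inclusion homomorphism from an induced subgraph. -/
private def inclHom (G : SimpleGraph W) (s : Set W) : G.induce s →g G :=
  ⟨Subtype.val, fun h => h⟩

private lemma isAcyclic_induce {G : SimpleGraph W} (hG : G.IsAcyclic) (s : Set W) :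
    (G.induce s).IsAcyclic := by
  intro v c hc
  exact hG (c.map (inclHom G s))
    ((Walk.map_isCycle_iff_of_injective Subtype.val_injective).mpr hc)

private lemma ncard_edges_in_le (G : SimpleGraph W) [Fintype W] (t : Set W) :
    {e | e ∈ G.edgeSet ∧ ∀ x ∈ e, x ∈ t}.ncard ≤ (G.induce t).edgeSet.ncard := by
  classical
  have hsub : {e | e ∈ G.edgeSet ∧ ∀ x ∈ e, x ∈ t} ⊆
      Sym2.map (Subtype.val : t → W) '' (G.induce t).edgeSet := by
    rintro e ⟨he, hx⟩
    induction e using Sym2.ind with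
    | _ a b =>
      have ha : a ∈ t := hx a (by simp)
      have hb : b ∈ t := hx b (by simp)
      exact ⟨s(⟨a, ha⟩, ⟨b, hb⟩), he, by simp⟩
  calc {e | e ∈ G.edgeSet ∧ ∀ x ∈ e, x ∈ t}.ncard
      ≤ (Sym2.map (Subtype.val : t → W) '' (G.induce t).edgeSet).ncard :=
        Set.ncard_le_ncard hsub (Set.toFinite _)
    _ ≤ (G.induce t).edgeSet.ncard := Set.ncard_image_le (Set.toFinite _)

private lemma connected_induce_supp {G : SimpleGraph W} (c : G.ConnectedComponent) :
    (G.induce c.supp).Connected := by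
  classical
  obtain ⟨v, hv⟩ := c.exists_rep
  have hvmem : v ∈ c.supp := (ConnectedComponent.mem_supp_iff c v).mpr hv
  rw [connected_iff]
  refine ⟨?_, ⟨⟨v, hvmem⟩⟩⟩
  rintro ⟨u, hu⟩ ⟨w, hw⟩
  rw [ConnectedComponent.mem_supp_iff] at hu hw
  obtain ⟨p⟩ : G.Reachable u w := ConnectedComponent.exact (hu.trans hw.symm)
  have hsupp : ∀ x ∈ p.support, x ∈ c.supp := by
    intro x hx
    have : G.Reachable u x := ⟨p.takeUntil x hx⟩
    rw [ConnectedComponent.mem_supp_iff, ← hu]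
    exact (ConnectedComponent.sound this).symm
  have hconn := p.connected_induce_support
  have hr : (G.induce {x | x ∈ p.support}).Reachable
      ⟨u, p.start_mem_support⟩ ⟨w, p.end_mem_support⟩ := hconn ⟨u, p.start_mem_support⟩ _
  let f : G.induce {x | x ∈ p.support} →g G.induce c.supp :=
    ⟨fun x => ⟨x.1, hsupp x.1 x.2⟩, fun h => h⟩
  have := hr.map f
  exact this

private lemma empty_edge_ncard {W' : Type*} (H : SimpleGraph W') [IsEmpty W'] :
    H.edgeSet.ncard = 0 := by
  have : H.edgeSet = ∅ := by
    ext e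
    induction e using Sym2.ind with
    | _ a b => exact (IsEmpty.false a).elim
  simp [this]

private lemma acyclic_bound : ∀ n : ℕ, ∀ {W : Type*} [Fintype W] (H : SimpleGraph W),
    Fintype.card W ≤ n → H.IsAcyclic → Nonempty W →
    H.edgeSet.ncard + 1 ≤ Fintype.card W := by
  intro n
  induction n with
  | zero =>
    intro W _ H hc hac hne
    rw [Nat.le_zero, Fintype.card_eq_zero_iff] at hc
    exact (hc.false hne.some).elim
  | succ n ih =>
    intro W _ H hc hac hne
    classical
    obtain ⟨v⟩ := hne
    set c := H.connectedComponentMk v with hcdef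
    set s := c.supp with hsdef
    have hvmem : v ∈ s := (ConnectedComponent.mem_supp_iff c v).mpr rfl
    have hcross : ∀ a b, H.Adj a b → a ∈ s → b ∈ s := by
      intro a b hab ha
      rw [hsdef, ConnectedComponent.mem_supp_iff] at ha ⊢
      rw [← ha]
      exact (ConnectedComponent.connectedComponentMk_eq_of_adj hab).symm
    -- split the edges
    have hsplit : H.edgeSet ⊆ {e | e ∈ H.edgeSet ∧ ∀ x ∈ e, x ∈ s} ∪
        {e | e ∈ H.edgeSet ∧ ∀ x ∈ e, x ∈ sᶜ} := by
      intro e he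
      induction e using Sym2.ind with
      | _ a b =>
        rw [mem_edgeSet] at he
        by_cases ha : a ∈ s
        · left
          refine ⟨he, ?_⟩
          intro x hx
          rcases Sym2.mem_iff.mp hx with rfl | rfl
          · exact ha
          · exact hcross a x he ha
        · right
          refine ⟨he, ?_⟩
          have hb : b ∉ s := fun hb => ha (hcross b a he.symm hb)
          intro x hx
          rcases Sym2.mem_iff.mp hx with rfl | rfl
          · exact ha
          · exact hb
    have hE : H.edgeSet.ncard ≤ (H.induce s).edgeSet.ncard + (H.induce sᶜ).edgeSet.ncard := by
      calc H.edgeSet.ncard ≤ ({e | e ∈ H.edgeSet ∧ ∀ x ∈ e, x ∈ s} ∪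
            {e | e ∈ H.edgeSet ∧ ∀ x ∈ e, x ∈ sᶜ}).ncard :=
            Set.ncard_le_ncard hsplit (Set.toFinite _)
        _ ≤ {e | e ∈ H.edgeSet ∧ ∀ x ∈ e, x ∈ s}.ncard +
            {e | e ∈ H.edgeSet ∧ ∀ x ∈ e, x ∈ sᶜ}.ncard := Set.ncard_union_le _ _
        _ ≤ _ := Nat.add_le_add (ncard_edges_in_le H s) (ncard_edges_in_le H sᶜ)
    -- the component is a tree
    have htree : (H.induce s).IsTree := ⟨connected_induce_supp c, isAcyclic_induce hac s⟩
    have htc : (H.induce s).edgeFinset.card + 1 = Fintype.card s := htree.card_edgeFinset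
    have hsc : (H.induce s).edgeSet.ncard + 1 = s.ncard := by
      simp only [← Nat.card_coe_set_eq, Nat.card_eq_fintype_card]
      rw [← edgeFinset_card]
      exact htc
    have hcompl : s.ncard + sᶜ.ncard = Fintype.card W := by
      rw [Set.ncard_add_ncard_compl, Nat.card_eq_fintype_card]
    have hspos : 1 ≤ s.ncard := by
      rw [Nat.one_le_iff_ne_zero, Ne, Set.ncard_eq_zero (Set.toFinite _)]
      exact fun h => by simp [h] at hvmem
    by_cases hne' : Nonempty ↥(sᶜ)
    · have hcard : Fintype.card ↥(sᶜ) ≤ n := by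
        have : Fintype.card ↥(sᶜ) = sᶜ.ncard := by
          rw [← Nat.card_coe_set_eq, Nat.card_eq_fintype_card]
        omega
      have hrec := ih (H.induce sᶜ) hcard (isAcyclic_induce hac sᶜ) hne'
      have : Fintype.card ↥(sᶜ) = sᶜ.ncard := by
        rw [← Nat.card_coe_set_eq, Nat.card_eq_fintype_card]
      omega
    · have hempty : IsEmpty ↥(sᶜ) := not_nonempty_iff.mp hne'
      have h0 : (H.induce sᶜ).edgeSet.ncard = 0 := empty_edge_ncard _
      have h0' : sᶜ.ncard = 0 := by
        rw [← Nat.card_coe_set_eq, Nat.card_eq_fintype_card, Fintype.card_eq_zero]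
      omega

end Aux

/-- Counting argument: if `G` is connected with maximum degree at most `3` and
`|E(G)| − |V(G)| = m − 1` with `m ≥ 1`, then every set of vertices meeting all
cycles of `G` has at least `m/2` vertices. -/
theorem feedback_set_lower_bound {V : Type*} [Fintype V] (G : SimpleGraph V)
    (hconn : G.Connected) (hdeg : ∀ v : V, {u | G.Adj v u}.ncard ≤ 3)
    (m : ℕ) (hm : 1 ≤ m) (hcount : G.edgeSet.ncard + 1 = Fintype.card V + m)
    (X : Set V)
    (hX : ∀ (v : V) (p : G.Walk v v), p.IsCycle → ∃ u ∈ X, u ∈ p.support) :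
    m ≤ 2 * X.ncard := by
  classical
  -- degrees are at most 3
  have hdeg' : ∀ v : V, G.degree v ≤ 3 := by
    intro v
    have : G.degree v = ({u | G.Adj v u} : Set V).ncard := by
      rw [← card_neighborSet_eq_degree, ← Nat.card_coe_set_eq, Nat.card_eq_fintype_card]
      rfl
    rw [this]
    exact hdeg v
  have hVpos : 1 ≤ Fintype.card V := Fintype.card_pos_iff.mpr hconn.nonempty
  -- the induced graph on Xᶜ is acyclic
  have hac : (G.induce Xᶜ).IsAcyclic := by
    intro v p hp
    obtain ⟨u, huX, hus⟩ := hX v.1 (p.map (inclHom G Xᶜ))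
      ((Walk.map_isCycle_iff_of_injective Subtype.val_injective).mpr hp)
    replace hus : u ∈ p.support.map (inclHom G Xᶜ) := by rw [← Walk.support_map]; exact hus
    obtain ⟨x, _, rfl⟩ := List.mem_map.mp hus
    exact x.2 huX
  by_cases hne : Nonempty ↥(Xᶜ)
  · -- the interesting case
    have hsplit : G.edgeSet ⊆ {e | e ∈ G.edgeSet ∧ ∀ x ∈ e, x ∈ Xᶜ} ∪
        {e | e ∈ G.edgeSet ∧ ∃ x ∈ e, x ∈ X} := by
      intro e he
      induction e using Sym2.ind with
      | _ a b =>
        by_cases ha : a ∈ X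
        · exact Or.inr ⟨he, a, by simp, ha⟩
        · by_cases hb : b ∈ X
          · exact Or.inr ⟨he, b, by simp, hb⟩
          · refine Or.inl ⟨he, ?_⟩
            intro x hx
            rcases Sym2.mem_iff.mp hx with rfl | rfl
            · exact ha
            · exact hb
    -- edges touching X are at most the degree sum over X
    have htouch : {e | e ∈ G.edgeSet ∧ ∃ x ∈ e, x ∈ X}.ncard ≤ 3 * X.ncard := by
      have hsub : ({e | e ∈ G.edgeSet ∧ ∃ x ∈ e, x ∈ X} : Set (Sym2 V)).toFinset ⊆
          X.toFinset.biUnion (fun v => G.incidenceFinset v) := by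
        intro e he
        rw [Set.mem_toFinset] at he
        obtain ⟨heE, x, hxe, hxX⟩ := he
        refine Finset.mem_biUnion.mpr ⟨x, Set.mem_toFinset.mpr hxX, ?_⟩
        rw [mem_incidenceFinset]
        exact ⟨heE, hxe⟩
      calc {e | e ∈ G.edgeSet ∧ ∃ x ∈ e, x ∈ X}.ncard
          = ({e | e ∈ G.edgeSet ∧ ∃ x ∈ e, x ∈ X} : Set (Sym2 V)).toFinset.card :=
            Set.ncard_eq_toFinset_card' _
        _ ≤ (X.toFinset.biUnion (fun v => G.incidenceFinset v)).card :=
            Finset.card_le_card hsub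
        _ ≤ ∑ v ∈ X.toFinset, (G.incidenceFinset v).card := Finset.card_biUnion_le
        _ = ∑ v ∈ X.toFinset, G.degree v := by
            refine Finset.sum_congr rfl fun v _ => ?_
            exact G.card_incidenceFinset_eq_degree v
        _ ≤ ∑ _v ∈ X.toFinset, 3 := Finset.sum_le_sum fun v _ => hdeg' v
        _ = 3 * X.ncard := by
            rw [Finset.sum_const, smul_eq_mul, Set.ncard_eq_toFinset_card', mul_comm]
    have hE : G.edgeSet.ncard ≤ (G.induce Xᶜ).edgeSet.ncard +
        {e | e ∈ G.edgeSet ∧ ∃ x ∈ e, x ∈ X}.ncard := by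
      calc G.edgeSet.ncard ≤ _ := Set.ncard_le_ncard hsplit (Set.toFinite _)
        _ ≤ _ := Set.ncard_union_le _ _
        _ ≤ _ := Nat.add_le_add_right (ncard_edges_in_le G Xᶜ) _
    have hforest := acyclic_bound (Fintype.card ↥(Xᶜ)) (G.induce Xᶜ) le_rfl hac hne
    have hcXc : Fintype.card ↥(Xᶜ) = Xᶜ.ncard := by
      rw [← Nat.card_coe_set_eq, Nat.card_eq_fintype_card]
    have hcompl : X.ncard + Xᶜ.ncard = Fintype.card V := by
      rw [Set.ncard_add_ncard_compl, Nat.card_eq_fintype_card]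
    omega
  · -- X = univ
    have hempty : IsEmpty ↥(Xᶜ) := not_nonempty_iff.mp hne
    have hXuniv : Xᶜ.ncard = 0 := by
      rw [← Nat.card_coe_set_eq, Nat.card_eq_fintype_card, Fintype.card_eq_zero]
    have hcompl : X.ncard + Xᶜ.ncard = Fintype.card V := by
      rw [Set.ncard_add_ncard_compl, Nat.card_eq_fintype_card]
    have hhs : ∑ v, G.degree v = 2 * G.edgeFinset.card := G.sum_degrees_eq_twice_card_edges
    have hEcard : G.edgeSet.ncard = G.edgeFinset.card := Set.ncard_eq_toFinset_card' _
    have hsum : ∑ v, G.degree v ≤ 3 * Fintype.card V := by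
      calc ∑ v, G.degree v ≤ ∑ _v : V, 3 := Finset.sum_le_sum fun v _ => hdeg' v
        _ = 3 * Fintype.card V := by rw [Finset.sum_const, smul_eq_mul, mul_comm]; simp
    omega
end
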